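/- arXiv:1107.0920 — 15 statements merged into one kernel-verified Lean document; each statement's English description precedes it below -/
import Mathlib

section
/- Let A be an associative unital k-algebra with dim A ≥ 2, and α, β, γ ∈ k. The map R(a⊗b) = α·ab⊗1 + β·1⊗ab − γ·a⊗b is an invertible solution of the braid equation R¹²R²³R¹² = R²³R¹²R²³ if and only if one of the following holds: (i) α = γ ≠ 0 and β ≠ 0; (ii) β = γ ≠ 0 and α ≠ 0; (iii) α = β = 0 and γ ≠ 0. -/
open TensorProduct LinearMap

noncomputable section

variable {k : Type*} [Field k]

/-- `R ⊗ I` acting on the first two factors of `V ⊗ (V ⊗ V)`. -/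
def leg12 {V : Type*} [AddCommGroup V] [Module k V]
    (R : V ⊗[k] V →ₗ[k] V ⊗[k] V) :
    V ⊗[k] (V ⊗[k] V) →ₗ[k] V ⊗[k] (V ⊗[k] V) :=
  (TensorProduct.assoc k V V V).toLinearMap ∘ₗ R.rTensor V ∘ₗ
    (TensorProduct.assoc k V V V).symm.toLinearMap

/-- `I ⊗ R` acting on the last two factors. -/
def leg23 {V : Type*} [AddCommGroup V] [Module k V]
    (R : V ⊗[k] V →ₗ[k] V ⊗[k] V) :
    V ⊗[k] (V ⊗[k] V) →ₗ[k] V ⊗[k] (V ⊗[k] V) :=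
  R.lTensor V

/-- `R¹³ = (I⊗τ)(R⊗I)(I⊗τ)`. -/
def leg13 {V : Type*} [AddCommGroup V] [Module k V]
    (R : V ⊗[k] V →ₗ[k] V ⊗[k] V) :
    V ⊗[k] (V ⊗[k] V) →ₗ[k] V ⊗[k] (V ⊗[k] V) :=
  ((TensorProduct.comm k V V).toLinearMap.lTensor V) ∘ₗ leg12 R ∘ₗ
    ((TensorProduct.comm k V V).toLinearMap.lTensor V)

section Aux

variable {A : Type*} [Ring A] [Algebra k A]

/-- Pairing with two dual vectors. -/
def dual2 (f g : Module.Dual k A) : A ⊗[k] A →ₗ[k] k :=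
  (TensorProduct.lid k k).toLinearMap ∘ₗ TensorProduct.map f g

@[simp] lemma dual2_tmul (f g : Module.Dual k A) (a b : A) :
    dual2 f g (a ⊗ₜ[k] b) = f a * g b := by
  simp [dual2, smul_eq_mul]

/-- Pairing with three dual vectors. -/
def dual3 (f g h : Module.Dual k A) : A ⊗[k] (A ⊗[k] A) →ₗ[k] k :=
  (TensorProduct.lid k k).toLinearMap ∘ₗ TensorProduct.map f (dual2 g h)

@[simp] lemma dual3_tmul (f g h : Module.Dual k A) (a b c : A) :
    dual3 f g h (a ⊗ₜ[k] (b ⊗ₜ[k] c)) = f a * (g b * h c) := by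
  simp [dual3, smul_eq_mul]

lemma exists_duals (hdim : 2 ≤ Module.rank k A) :
    ∃ (x : A) (f g : Module.Dual k A), f 1 = 0 ∧ f x = 1 ∧ g 1 = 1 := by
  have hnt : Nontrivial A := by
    rw [← rank_pos_iff_nontrivial (R := k)]
    exact lt_of_lt_of_le (by norm_num) hdim
  -- a vector outside the span of 1
  obtain ⟨x, hx⟩ : ∃ x : A, x ∉ Submodule.span k {(1 : A)} := by
    by_contra h
    push_neg at h
    have htop : Submodule.span k {(1 : A)} = ⊤ := eq_top_iff.2 fun y _ => h y
    have h1 : Module.rank k (Submodule.span k {(1 : A)}) ≤ 1 := by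
      simpa using rank_span_le (R := k) (M := A) {(1 : A)}
    rw [htop, rank_top] at h1
    exact absurd (hdim.trans h1) (by norm_num)
  -- functional vanishing at 1, nonzero at x
  have hxQ : (Submodule.Quotient.mk x : A ⧸ Submodule.span k {(1 : A)}) ≠ 0 := by
    simpa [Submodule.Quotient.mk_eq_zero] using hx
  obtain ⟨φ, hφ⟩ : ∃ φ : Module.Dual k (A ⧸ Submodule.span k {(1 : A)}),
      φ (Submodule.Quotient.mk x) ≠ 0 := by
    by_contra h
    push_neg at h
    exact hxQ ((Module.forall_dual_apply_eq_zero_iff k _).1 h)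
  -- functional nonzero at 1
  obtain ⟨ψ, hψ⟩ : ∃ ψ : Module.Dual k A, ψ 1 ≠ 0 := by
    by_contra h
    push_neg at h
    exact one_ne_zero ((Module.forall_dual_apply_eq_zero_iff k _).1 h)
  refine ⟨x, (φ (Submodule.Quotient.mk x))⁻¹ •
      (φ ∘ₗ (Submodule.span k {(1 : A)}).mkQ), (ψ 1)⁻¹ • ψ, ?_, ?_, ?_⟩
  · have h1 : ((Submodule.span k {(1 : A)}).mkQ) (1 : A) = 0 := by
      simp [Submodule.Quotient.mk_eq_zero, Submodule.mem_span_singleton_self]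
    simp [h1]
  · simp [inv_mul_cancel₀ hφ, Submodule.mkQ_apply]
  · simp [inv_mul_cancel₀ hψ]

variable (α β γ : k) (R : A ⊗[k] A →ₗ[k] A ⊗[k] A)
variable (hR : ∀ a b : A, R (a ⊗ₜ[k] b) =
      α • ((a * b) ⊗ₜ[k] (1 : A)) + β • ((1 : A) ⊗ₜ[k] (a * b)) - γ • (a ⊗ₜ[k] b))

include hR

lemma braid_diff (a b c : A) :
    leg12 R (leg23 R (leg12 R (a ⊗ₜ[k] (b ⊗ₜ[k] c)))) -
      leg23 R (leg12 R (leg23 R (a ⊗ₜ[k] (b ⊗ₜ[k] c)))) =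
    (α*((γ-α)*(γ-β))) • ((a*b) ⊗ₜ[k] ((1:A) ⊗ₜ[k] c) - a ⊗ₜ[k] ((b*c) ⊗ₜ[k] (1:A))) +
    (β*((γ-α)*(γ-β))) • ((1:A) ⊗ₜ[k] ((a*b) ⊗ₜ[k] c) - a ⊗ₜ[k] ((1:A) ⊗ₜ[k] (b*c))) := by
  simp only [leg12, leg23, LinearMap.comp_apply, LinearEquiv.coe_coe,
    TensorProduct.assoc_symm_tmul, TensorProduct.assoc_tmul, rTensor_tmul, lTensor_tmul,
    hR, map_add, map_sub, map_smul, tmul_add, tmul_sub, add_tmul, sub_tmul,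
    smul_mul_assoc, mul_smul_comm, smul_tmul, tmul_smul, smul_smul, mul_one, one_mul, mul_assoc]
  module

lemma Rsq (v : A ⊗[k] A) :
    R (R v) = (α + β - 2*γ) • R v + (γ*(α + β - γ)) • v := by
  have hcomp : R ∘ₗ R = (α + β - 2*γ) • R + (γ*(α + β - γ)) • LinearMap.id := by
    apply TensorProduct.ext'
    intro a b
    simp only [LinearMap.comp_apply, LinearMap.add_apply, LinearMap.smul_apply,
      LinearMap.id_apply, hR, map_add, map_sub, map_smul, mul_one, one_mul, smul_smul,
      smul_add, smul_sub]
    module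
  have := LinearMap.congr_fun hcomp v
  simpa only [LinearMap.comp_apply, LinearMap.add_apply, LinearMap.smul_apply,
    LinearMap.id_apply] using this

end Aux

theorem dascalescu_nichita_yang_baxter_classification
    (A : Type*) [Ring A] [Algebra k A] (hdim : 2 ≤ Module.rank k A)
    (α β γ : k) (R : A ⊗[k] A →ₗ[k] A ⊗[k] A)
    (hR : ∀ a b : A, R (a ⊗ₜ[k] b) =
      α • ((a * b) ⊗ₜ[k] (1 : A)) + β • ((1 : A) ⊗ₜ[k] (a * b)) - γ • (a ⊗ₜ[k] b)) :
    (Function.Bijective R ∧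
      leg12 R ∘ₗ leg23 R ∘ₗ leg12 R = leg23 R ∘ₗ leg12 R ∘ₗ leg23 R) ↔
    ((α = γ ∧ γ ≠ 0 ∧ β ≠ 0) ∨ (β = γ ∧ γ ≠ 0 ∧ α ≠ 0) ∨
      (α = 0 ∧ β = 0 ∧ γ ≠ 0)) := by
  obtain ⟨x, f, g, hf1, hfx, hg1⟩ := exists_duals (k := k) (A := A) hdim
  constructor
  · rintro ⟨hbij, hbraid⟩
    -- γ ≠ 0
    have hγ : γ ≠ 0 := by
      intro h0
      have hker : R (x ⊗ₜ[k] (1:A) - (1:A) ⊗ₜ[k] x) = 0 := by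
        rw [map_sub, hR, hR, h0]
        simp [mul_one, one_mul]
      have h1 : x ⊗ₜ[k] (1:A) - (1:A) ⊗ₜ[k] x = 0 := by
        apply hbij.1
        rw [hker, map_zero]
      have h2 := congrArg (dual2 f g) h1
      simp [map_sub, hf1, hfx, hg1] at h2
    -- α + β ≠ γ
    have hsum : α + β - γ ≠ 0 := by
      intro hs
      have hRv : ∀ v : A ⊗[k] A, R v = (-γ) • v := by
        intro v
        have h2 : R (R v + γ • v) = 0 := by
          rw [map_add, map_smul, Rsq α β γ R hR v, hs, mul_zero, zero_smul, add_zero]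
          have hd : α + β - 2*γ = -γ := by rw [show α + β = γ by linear_combination hs]; ring
          rw [hd]
          module
        have h3 : R v + γ • v = 0 := by
          apply hbij.1
          rw [h2, map_zero]
        have := eq_neg_of_add_eq_zero_left h3
        rw [this]; module
      have h4 := hRv (x ⊗ₜ[k] (1:A))
      rw [hR] at h4
      have h5 : α • (x ⊗ₜ[k] (1:A)) + β • ((1:A) ⊗ₜ[k] x) = 0 := by
        have := h4
        simp only [mul_one] at this
        linear_combination (norm := module) this
      have hα : α = 0 := by
        have := congrArg (dual2 f g) h5
        simpa [map_add, hf1, hfx, hg1] using this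
      have hβ : β = 0 := by
        have := congrArg (dual2 g f) h5
        simpa [map_add, hf1, hfx, hg1] using this
      rw [hα, hβ] at hs
      simp at hs
      exact hγ hs
    -- braid coefficients vanish
    have hDz : ∀ a b c : A,
        (α*((γ-α)*(γ-β))) • ((a*b) ⊗ₜ[k] ((1:A) ⊗ₜ[k] c) - a ⊗ₜ[k] ((b*c) ⊗ₜ[k] (1:A))) +
        (β*((γ-α)*(γ-β))) • ((1:A) ⊗ₜ[k] ((a*b) ⊗ₜ[k] c) - a ⊗ₜ[k] ((1:A) ⊗ₜ[k] (b*c))) = 0 := by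
      intro a b c
      rw [← braid_diff α β γ R hR a b c, sub_eq_zero]
      exact LinearMap.congr_fun hbraid (a ⊗ₜ[k] (b ⊗ₜ[k] c))
    have hA : α*((γ-α)*(γ-β)) = 0 := by
      have h6 := hDz 1 1 x
      simp only [one_mul, mul_one, sub_self, smul_zero, add_zero] at h6
      have := congrArg (dual3 g f g) h6
      simpa [map_smul, map_sub, hf1, hfx, hg1, smul_eq_mul, sub_eq_zero] using this
    have hB : β*((γ-α)*(γ-β)) = 0 := by
      have h6 := hDz x 1 1
      simp only [one_mul, mul_one, sub_self, smul_zero, zero_add] at h6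
      have := congrArg (dual3 g f g) h6
      simpa [map_smul, map_sub, hf1, hfx, hg1, smul_eq_mul, sub_eq_zero] using this
    by_cases hprod : (γ-α)*(γ-β) = 0
    · rcases mul_eq_zero.1 hprod with h | h
      · left
        have hαγ : α = γ := by linear_combination -h
        refine ⟨hαγ, hγ, fun hβ0 => hsum ?_⟩
        rw [hαγ, hβ0]; ring
      · right; left
        have hβγ : β = γ := by linear_combination -h
        refine ⟨hβγ, hγ, fun hα0 => hsum ?_⟩
        rw [hβγ, hα0]; ring
    · right; right
      exact ⟨by rcases mul_eq_zero.1 hA with h | h; exact h; exact absurd h hprod,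
        by rcases mul_eq_zero.1 hB with h | h; exact h; exact absurd h hprod, hγ⟩
  · intro hcase
    -- from the case hypotheses, extract what we need
    have hc : γ * (α + β - γ) ≠ 0 := by
      rcases hcase with ⟨h1, h2, h3⟩ | ⟨h1, h2, h3⟩ | ⟨h1, h2, h3⟩
      · apply mul_ne_zero h2; rw [← h1]; simpa using h3
      · apply mul_ne_zero h2; rw [← h1]; simpa [add_sub_cancel_right] using h3
      · apply mul_ne_zero h3; intro h; exact h3 (by linear_combination h1 + h2 - h)
    have hzA : α*((γ-α)*(γ-β)) = 0 := by
      rcases hcase with ⟨h1, _, _⟩ | ⟨h1, _, _⟩ | ⟨h1, h2, _⟩ <;> rw [h1] <;> ring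
    have hzB : β*((γ-α)*(γ-β)) = 0 := by
      rcases hcase with ⟨h1, _, _⟩ | ⟨h1, _, _⟩ | ⟨h1, h2, _⟩
      · rw [h1]; ring
      · rw [h1]; ring
      · rw [h2]; ring
    constructor
    · constructor
      · -- injective
        intro v w hvw
        have h0 : R (v - w) = 0 := by rw [map_sub, hvw, sub_self]
        have h1 := Rsq α β γ R hR (v - w)
        rw [h0, map_zero, smul_zero, zero_add] at h1
        have h2 : (γ*(α+β-γ)) • (v - w) = 0 := h1.symm
        rw [smul_eq_zero] at h2
        rcases h2 with h | h
        · exact absurd h hc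
        · exact sub_eq_zero.1 h
      · -- surjective
        intro v
        refine ⟨(γ*(α+β-γ))⁻¹ • (R v - (α + β - 2*γ) • v), ?_⟩
        rw [map_smul, map_sub, map_smul, Rsq α β γ R hR v, add_sub_cancel_left,
          smul_smul, inv_mul_cancel₀ hc, one_smul]
    · -- braid equation
      apply LinearMap.ext
      intro v
      induction v using TensorProduct.induction_on with
      | zero => simp
      | add u w hu hw => simp only [map_add, LinearMap.comp_apply] at hu hw ⊢; rw [hu, hw]
      | tmul a yz =>
        induction yz using TensorProduct.induction_on with
        | zero => simp
        | add u w hu hw =>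
          simp only [tmul_add, map_add, LinearMap.comp_apply] at hu hw ⊢; rw [hu, hw]
        | tmul b c =>
          have hD := braid_diff α β γ R hR a b c
          rw [hzA, hzB, zero_smul, zero_smul, add_zero, sub_eq_zero] at hD
          simpa only [LinearMap.comp_apply] using hD

end
end

section
/- Let A be an associative unital k-algebra and p, q ∈ k. Define R(u,v)(a⊗b) = p(u−v)·1⊗ab + q(u−v)·ab⊗1 − (pu−qv)·b⊗a for u, v ∈ k. Then R satisfies the two-parameter (colored) quantum Yang-Baxter equation: R¹²(u,v)R¹³(u,w)R²³(v,w) = R²³(v,w)R¹³(u,w)R¹²(u,v) for all u, v, w ∈ k. -/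
open TensorProduct LinearMap

noncomputable section

variable {k : Type*} [Field k]

set_option maxHeartbeats 1000000 in
set_option synthInstance.maxHeartbeats 200000 in
theorem colored_qybe_from_algebra
    (A : Type*) [Ring A] [Algebra k A] (p q : k)
    (R : k → k → (A ⊗[k] A →ₗ[k] A ⊗[k] A))
    (hR : ∀ u v : k, ∀ a b : A, R u v (a ⊗ₜ[k] b) =
      (p * (u - v)) • ((1 : A) ⊗ₜ[k] (a * b)) +
      (q * (u - v)) • ((a * b) ⊗ₜ[k] (1 : A)) -
      (p * u - q * v) • (b ⊗ₜ[k] a)) :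
    ∀ u v w : k,
      leg12 (R u v) ∘ₗ leg13 (R u w) ∘ₗ leg23 (R v w) =
      leg23 (R v w) ∘ₗ leg13 (R u w) ∘ₗ leg12 (R u v) := by
  intro u v w
  ext a b c
  simp only [leg12, leg23, leg13, TensorProduct.AlgebraTensorModule.curry_apply,
    TensorProduct.curry_apply, LinearMap.coe_restrictScalars, compr₂_apply, mk_apply, coe_comp, Function.comp_apply,
    LinearEquiv.coe_coe, assoc_symm_tmul, assoc_tmul, rTensor_tmul, lTensor_tmul, comm_tmul,
    hR, id_coe, id_eq, map_add, map_sub, map_smul, tmul_add, tmul_sub, tmul_smul, add_tmul,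
    sub_tmul, smul_tmul', one_mul, mul_one, mul_assoc, smul_mul_assoc, mul_smul_comm]
  simp only [← smul_tmul', tmul_smul]
  module
end
end

section
/- Let A be an associative unital k-algebra, p, q ∈ k, and u, v ∈ k with pu ≠ qv and qu ≠ pv. Then the operator R(u,v)(a⊗b) = p(u−v)·1⊗ab + q(u−v)·ab⊗1 − (pu−qv)·b⊗a is invertible, with inverse R⁻¹(u,v)(a⊗b) = [p(u−v)/((qu−pv)(pu−qv))]·ba⊗1 + [q(u−v)/((qu−pv)(pu−qv))]·1⊗ba − [1/(pu−qv)]·b⊗a. -/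
open TensorProduct LinearMap

noncomputable section

variable {k : Type*} [Field k]

theorem colored_operator_inverse
    (A : Type*) [Ring A] [Algebra k A] (p q u v : k)
    (h1 : p * u ≠ q * v) (h2 : q * u ≠ p * v)
    (R S : A ⊗[k] A →ₗ[k] A ⊗[k] A)
    (hR : ∀ a b : A, R (a ⊗ₜ[k] b) =
      (p * (u - v)) • ((1 : A) ⊗ₜ[k] (a * b)) +
      (q * (u - v)) • ((a * b) ⊗ₜ[k] (1 : A)) -
      (p * u - q * v) • (b ⊗ₜ[k] a))
    (hS : ∀ a b : A, S (a ⊗ₜ[k] b) =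
      (p * (u - v) / ((q * u - p * v) * (p * u - q * v))) • ((b * a) ⊗ₜ[k] (1 : A)) +
      (q * (u - v) / ((q * u - p * v) * (p * u - q * v))) • ((1 : A) ⊗ₜ[k] (b * a)) -
      (1 / (p * u - q * v)) • (b ⊗ₜ[k] a)) :
    S ∘ₗ R = LinearMap.id ∧ R ∘ₗ S = LinearMap.id := by
  have hg : p * u - q * v ≠ 0 := sub_ne_zero.mpr h1
  have hd : q * u - p * v ≠ 0 := sub_ne_zero.mpr h2
  constructor <;>
  · apply TensorProduct.ext'
    intro a b
    simp only [LinearMap.comp_apply, LinearMap.id_apply, hR, hS, map_add, map_sub, map_smul,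
      one_mul, mul_one, smul_add, smul_sub, smul_smul]
    match_scalars <;> field_simp [mul_comm u q ▸ hd] <;> ring
end
end

section
/- Let A be an associative unital ℝ-algebra and q ∈ ℝ. The operator S(λ)(a⊗b) = (e^λ − 1)·1⊗ab + q(e^λ − 1)·ab⊗1 − (e^λ − q)·b⊗a satisfies the one-parameter (additive) Yang-Baxter equation S¹²(λ₁−λ₂)S¹³(λ₁−λ₃)S²³(λ₂−λ₃) = S²³(λ₂−λ₃)S¹³(λ₁−λ₃)S¹²(λ₁−λ₂) for all λ₁, λ₂, λ₃ ∈ ℝ. -/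
open TensorProduct LinearMap

noncomputable section

variable {k : Type*} [Field k]

set_option maxHeartbeats 2000000 in
set_option synthInstance.maxHeartbeats 400000 in
theorem one_parameter_ybe_from_algebra
    (A : Type*) [Ring A] [Algebra ℝ A] (q : ℝ)
    (S : ℝ → (A ⊗[ℝ] A →ₗ[ℝ] A ⊗[ℝ] A))
    (hS : ∀ lam : ℝ, ∀ a b : A, S lam (a ⊗ₜ[ℝ] b) =
      (Real.exp lam - 1) • ((1 : A) ⊗ₜ[ℝ] (a * b)) +
      (q * (Real.exp lam - 1)) • ((a * b) ⊗ₜ[ℝ] (1 : A)) -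
      (Real.exp lam - q) • (b ⊗ₜ[ℝ] a)) :
    ∀ lam₁ lam₂ lam₃ : ℝ,
      leg12 (S (lam₁ - lam₂)) ∘ₗ leg13 (S (lam₁ - lam₃)) ∘ₗ leg23 (S (lam₂ - lam₃)) =
      leg23 (S (lam₂ - lam₃)) ∘ₗ leg13 (S (lam₁ - lam₃)) ∘ₗ leg12 (S (lam₁ - lam₂)) := by
  intro l1 l2 l3
  have h13 : Real.exp (l1 - l3) = Real.exp (l1 - l2) * Real.exp (l2 - l3) := by
    rw [← Real.exp_add]; ring_nf
  ext a b c
  simp only [leg12, leg13, leg23, LinearMap.coe_comp, Function.comp_apply,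
    LinearEquiv.coe_coe, TensorProduct.assoc_symm_tmul, TensorProduct.assoc_tmul,
    TensorProduct.comm_tmul, LinearMap.lTensor_tmul, LinearMap.rTensor_tmul,
    TensorProduct.AlgebraTensorModule.curry_apply, TensorProduct.curry_apply,
    LinearMap.restrictScalars_apply, TensorProduct.mk_apply, hS,
    TensorProduct.tmul_add, TensorProduct.add_tmul, TensorProduct.tmul_sub,
    TensorProduct.sub_tmul, TensorProduct.tmul_smul, TensorProduct.smul_tmul',
    map_add, map_sub, map_smul, smul_mul_assoc, mul_smul_comm,
    one_mul, mul_one, mul_assoc, h13]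
  set x := Real.exp (l1 - l2)
  set y := Real.exp (l2 - l3)
  simp only [← TensorProduct.smul_tmul', TensorProduct.tmul_smul, smul_smul]
  module
end
end

section
/- Let A be an associative unital ℝ-algebra, q ∈ ℝ, and λ ∈ ℝ such that e^λ ≠ q and e^λ ≠ 1/q (with q ≠ 0). Then S(λ)(a⊗b) = (e^λ−1)·1⊗ab + q(e^λ−1)·ab⊗1 − (e^λ−q)·b⊗a is invertible with inverse S⁻¹(λ)(a⊗b) = [(e^λ−1)/((qe^λ−1)(e^λ−q))]·ba⊗1 + [q(e^λ−1)/((qe^λ−1)(e^λ−q))]·1⊗ba − [1/(e^λ−q)]·b⊗a. -/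
open TensorProduct LinearMap

noncomputable section

variable {k : Type*} [Field k]

theorem one_parameter_operator_inverse
    (A : Type*) [Ring A] [Algebra ℝ A] (q lam : ℝ) (hq : q ≠ 0)
    (h1 : Real.exp lam ≠ q) (h2 : Real.exp lam ≠ 1 / q)
    (S T : A ⊗[ℝ] A →ₗ[ℝ] A ⊗[ℝ] A)
    (hS : ∀ a b : A, S (a ⊗ₜ[ℝ] b) =
      (Real.exp lam - 1) • ((1 : A) ⊗ₜ[ℝ] (a * b)) +
      (q * (Real.exp lam - 1)) • ((a * b) ⊗ₜ[ℝ] (1 : A)) -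
      (Real.exp lam - q) • (b ⊗ₜ[ℝ] a))
    (hT : ∀ a b : A, T (a ⊗ₜ[ℝ] b) =
      ((Real.exp lam - 1) / ((q * Real.exp lam - 1) * (Real.exp lam - q))) •
        ((b * a) ⊗ₜ[ℝ] (1 : A)) +
      (q * (Real.exp lam - 1) / ((q * Real.exp lam - 1) * (Real.exp lam - q))) •
        ((1 : A) ⊗ₜ[ℝ] (b * a)) -
      (1 / (Real.exp lam - q)) • (b ⊗ₜ[ℝ] a)) :
    T ∘ₗ S = LinearMap.id ∧ S ∘ₗ T = LinearMap.id := by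
  have hEq : Real.exp lam - q ≠ 0 := sub_ne_zero.mpr h1
  have hqE : q * Real.exp lam - 1 ≠ 0 := by
    intro h
    apply h2
    field_simp
    linarith [sub_eq_zero.mp h]
  have hqE' : Real.exp lam * q - 1 ≠ 0 := by rwa [mul_comm]
  constructor <;> apply TensorProduct.ext' <;> intro a b <;>
    simp only [LinearMap.comp_apply, hS, hT, map_add, map_sub, map_smul,
      LinearMap.id_apply, one_mul, mul_one] <;>
    match_scalars <;> field_simp <;> ring
end
end

section
/- Let A be an associative unital k-algebra and λ, μ ∈ k. Define W(a⊗b) = ab⊗1 + λ·1⊗ab − b⊗a, Z(a⊗b) = μ·ab⊗1 + 1⊗ab − b⊗a, X(a⊗b) = ab⊗1 + 1⊗ab − b⊗a. Then (W, X, Z) is a WXZ-system: [W,W,W] = 0, [Z,Z,Z] = 0, [W,X,X] = 0, and [X,X,Z] = 0. -/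
open TensorProduct LinearMap

noncomputable section

variable {k : Type*} [Field k]

/-- The constant Yang–Baxter commutator [R,S,T] = R¹²S¹³T²³ − T²³S¹³R¹². -/
def ybComm {V : Type*} [AddCommGroup V] [Module k V]
    (R S T : V ⊗[k] V →ₗ[k] V ⊗[k] V) :
    V ⊗[k] (V ⊗[k] V) →ₗ[k] V ⊗[k] (V ⊗[k] V) :=
  leg12 R ∘ₗ leg13 S ∘ₗ leg23 T - leg23 T ∘ₗ leg13 S ∘ₗ leg12 R

set_option synthInstance.maxHeartbeats 1000000 in
set_option maxHeartbeats 4000000 in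
theorem wxz_system_from_algebra
    (A : Type*) [Ring A] [Algebra k A] (lam mu : k)
    (W Z X : A ⊗[k] A →ₗ[k] A ⊗[k] A)
    (hW : ∀ a b : A, W (a ⊗ₜ[k] b) =
      (a * b) ⊗ₜ[k] (1 : A) + lam • ((1 : A) ⊗ₜ[k] (a * b)) - b ⊗ₜ[k] a)
    (hZ : ∀ a b : A, Z (a ⊗ₜ[k] b) =
      mu • ((a * b) ⊗ₜ[k] (1 : A)) + (1 : A) ⊗ₜ[k] (a * b) - b ⊗ₜ[k] a)
    (hX : ∀ a b : A, X (a ⊗ₜ[k] b) =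
      (a * b) ⊗ₜ[k] (1 : A) + (1 : A) ⊗ₜ[k] (a * b) - b ⊗ₜ[k] a) :
    ybComm W W W = 0 ∧ ybComm Z Z Z = 0 ∧ ybComm W X X = 0 ∧ ybComm X X Z = 0 := by
  refine ⟨?_, ?_, ?_, ?_⟩ <;>
  · ext a b c
    simp only [TensorProduct.AlgebraTensorModule.curry_apply, TensorProduct.curry_apply,
      LinearMap.coe_restrictScalars, ybComm, leg12, leg13, leg23, coe_comp,
      Function.comp_apply, LinearMap.sub_apply, LinearEquiv.coe_coe, TensorProduct.assoc_symm_tmul,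
      TensorProduct.assoc_tmul, lTensor_tmul, rTensor_tmul, TensorProduct.comm_tmul,
      hW, hZ, hX, TensorProduct.tmul_sub, TensorProduct.sub_tmul, TensorProduct.tmul_add,
      TensorProduct.add_tmul, map_add, map_sub, mul_one, one_mul, mul_assoc,
      LinearMap.zero_apply, _root_.map_smul, smul_mul_assoc, mul_smul_comm,
      ← TensorProduct.smul_tmul', TensorProduct.tmul_smul, smul_smul, smul_sub, smul_add]
    module
end
end

section
/- Let L be a Lie superalgebra over k, z ∈ Z(L) a central element of degree 0, and α ∈ k. Then the map φ(x⊗y) = α[x,y]⊗z + (−1)^{|x||y|} y⊗x (on homogeneous x, y) satisfies the braid equation φ¹²φ²³φ¹² = φ²³φ¹²φ²³ and is invertible with inverse φ⁻¹(x⊗y) = α z⊗[x,y] + (−1)^{|x||y|} y⊗x. -/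
open TensorProduct LinearMap

noncomputable section

variable {k : Type*} [Field k]

theorem yb_operator_from_lie_superalgebra
    (hchar : (2 : k) ≠ 0)
    (L : Type*) [AddCommGroup L] [Module k L]
    (G : ZMod 2 → Submodule k L) (hG : DirectSum.IsInternal G)
    (br : L →ₗ[k] L →ₗ[k] L)
    (hgrade : ∀ i j : ZMod 2, ∀ x ∈ G i, ∀ y ∈ G j, br x y ∈ G (i + j))
    (hanti : ∀ i j : ZMod 2, ∀ x ∈ G i, ∀ y ∈ G j,
      br x y = -(((-1 : k) ^ (i.val * j.val)) • br y x))
    (hjacobi : ∀ i j l : ZMod 2, ∀ x ∈ G i, ∀ y ∈ G j, ∀ t ∈ G l,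
      ((-1 : k) ^ (l.val * i.val)) • br x (br y t) +
      ((-1 : k) ^ (i.val * j.val)) • br y (br t x) +
      ((-1 : k) ^ (j.val * l.val)) • br t (br x y) = 0)
    (z : L) (hz0 : z ∈ G 0) (hzc : ∀ x : L, br z x = 0)
    (α : k)
    (φ ψ : L ⊗[k] L →ₗ[k] L ⊗[k] L)
    (hφ : ∀ i j : ZMod 2, ∀ x ∈ G i, ∀ y ∈ G j,
      φ (x ⊗ₜ[k] y) = α • (br x y ⊗ₜ[k] z) + ((-1 : k) ^ (i.val * j.val)) • (y ⊗ₜ[k] x))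
    (hψ : ∀ i j : ZMod 2, ∀ x ∈ G i, ∀ y ∈ G j,
      ψ (x ⊗ₜ[k] y) = α • (z ⊗ₜ[k] br x y) + ((-1 : k) ^ (i.val * j.val)) • (y ⊗ₜ[k] x)) :
    (leg12 φ ∘ₗ leg23 φ ∘ₗ leg12 φ = leg23 φ ∘ₗ leg12 φ ∘ₗ leg23 φ) ∧
    ψ ∘ₗ φ = LinearMap.id ∧ φ ∘ₗ ψ = LinearMap.id := by
  have hval : ∀ m : ZMod 2, m = 0 ∨ m = 1 := by decide
  have hind : ∀ (C : L → Prop), C 0 → (∀ a b, C a → C b → C (a + b)) →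
      (∀ i : ZMod 2, ∀ x ∈ G i, C x) → ∀ a, C a := by
    intro C h0 hadd hhom a
    have ha : a ∈ ⨆ i, G i := by rw [hG.submodule_iSup_eq_top]; trivial
    exact Submodule.iSup_induction (motive := C) G ha hhom h0 hadd
  have hzc' : ∀ a : L, br a z = 0 := by
    refine hind _ (by simp) (fun a b ha hb => by
      rw [map_add, LinearMap.add_apply, ha, hb, add_zero]) ?_
    intro i x hx
    rw [hanti i 0 x hx z hz0, hzc, smul_zero, neg_zero]
  have hφzl : ∀ j : ZMod 2, ∀ y ∈ G j, φ (z ⊗ₜ[k] y) = y ⊗ₜ[k] z := by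
    intro j y hy
    rw [hφ 0 j z hz0 y hy, hzc]
    simp [show ((0:ZMod 2)).val = 0 from rfl]
  have hφzr : ∀ i : ZMod 2, ∀ x ∈ G i, φ (x ⊗ₜ[k] z) = z ⊗ₜ[k] x := by
    intro i x hx
    rw [hφ i 0 x hx z hz0, hzc']
    simp [show ((0:ZMod 2)).val = 0 from rfl]
  have key : ∀ i j l : ZMod 2, ∀ x ∈ G i, ∀ y ∈ G j, ∀ t ∈ G l,
      br x (br y t) = br (br x y) t + ((-1:k)^(i.val*j.val)) • br y (br x t) := by
    intro i j l x hx y hy t ht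
    have J := hjacobi i j l x hx y hy t ht
    rw [hanti l i t ht x hx, hanti l (i+j) t ht _ (hgrade i j x hx y hy)] at J
    simp only [map_neg, map_smul, smul_neg, smul_smul] at J
    rcases hval i with hi | hi <;> rcases hval j with hj | hj <;>
      rcases hval l with hl | hl <;> subst hi hj hl <;>
      norm_num [show ((0:ZMod 2)).val = 0 from rfl, show ((1:ZMod 2)).val = 1 from rfl,
        show ((1:ZMod 2)+1) = 0 from rfl, show ((0:ZMod 2)+1) = 1 from rfl,
        show ((1:ZMod 2)+0) = 1 from rfl, show ((0:ZMod 2)+0) = 0 from rfl,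
        show ((2:ZMod 2)).val = 0 from rfl] at J ⊢ <;>
      first
        | linear_combination (norm := module) J
        | linear_combination (norm := module) -J
  have l12t : ∀ a b c : L, leg12 φ (a ⊗ₜ (b ⊗ₜ c)) =
      (TensorProduct.assoc k L L L) (φ (a ⊗ₜ b) ⊗ₜ c) := by
    intro a b c; simp [leg12]
  have l23t : ∀ a b c : L, leg23 φ (a ⊗ₜ (b ⊗ₜ c)) = a ⊗ₜ φ (b ⊗ₜ c) := by
    intro a b c; simp [leg23]
  have hpt : ∀ i j l : ZMod 2, ∀ x ∈ G i, ∀ y ∈ G j, ∀ t ∈ G l,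
      (leg12 φ) ((leg23 φ) ((leg12 φ) (x ⊗ₜ (y ⊗ₜ t)))) =
      (leg23 φ) ((leg12 φ) ((leg23 φ) (x ⊗ₜ (y ⊗ₜ t)))) := by
    intro i j l x hx y hy t ht
    have A1 := hφ i j x hx y hy
    have A2 := hφzl l t ht
    have A3 := hφ i l x hx t ht
    have A4 := hφ (i+j) l _ (hgrade i j x hx y hy) t ht
    have A5 := hφ j (i+l) y hy _ (hgrade i l x hx t ht)
    have A6 := hφ j l y hy t ht
    have B1 := hφ i (j+l) x hx _ (hgrade j l y hy t ht)
    have B2 := hφzl 0 z hz0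
    have B3 := hφzr i x hx
    have B4 := hφzl j y hy
    have keyx := key i j l x hx y hy t ht
    rcases hval i with hi | hi <;> rcases hval j with hj | hj <;>
      rcases hval l with hl | hl <;> subst hi hl hj <;>
      norm_num [show ((0:ZMod 2)).val = 0 from rfl, show ((1:ZMod 2)).val = 1 from rfl,
        show ((1:ZMod 2)+1) = 0 from rfl, show ((0:ZMod 2)+1) = 1 from rfl,
        show ((1:ZMod 2)+0) = 1 from rfl, show ((0:ZMod 2)+0) = 0 from rfl,
        show ((2:ZMod 2)).val = 0 from rfl]
        at A1 A3 A4 A5 A6 B1 keyx <;>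
      simp only [l12t, l23t, A1, A2, A3, A4, A5, A6, B1, B2, B3, B4, keyx,
        map_add, map_smul, smul_add, smul_smul, add_tmul, tmul_add,
        ← TensorProduct.smul_tmul', tmul_smul, assoc_tmul, neg_smul, one_smul,
        neg_neg, neg_tmul, tmul_neg, smul_neg, map_neg, add_tmul, tmul_add] <;>
      module
  have main3 : ∀ a b c : L,
      (leg12 φ) ((leg23 φ) ((leg12 φ) (a ⊗ₜ (b ⊗ₜ c)))) =
      (leg23 φ) ((leg12 φ) ((leg23 φ) (a ⊗ₜ (b ⊗ₜ c)))) := by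
    intro a
    refine hind (fun a => ∀ b c : L,
        (leg12 φ) ((leg23 φ) ((leg12 φ) (a ⊗ₜ (b ⊗ₜ c)))) =
        (leg23 φ) ((leg12 φ) ((leg23 φ) (a ⊗ₜ (b ⊗ₜ c))))) ?_ ?_ ?_ a
    · intro b c; simp
    · intro a a' ha ha' b c
      simp only [add_tmul, map_add, ha b c, ha' b c]
    · intro i x hx
      intro b
      refine hind (fun b => ∀ c : L,
          (leg12 φ) ((leg23 φ) ((leg12 φ) (x ⊗ₜ (b ⊗ₜ c)))) =
          (leg23 φ) ((leg12 φ) ((leg23 φ) (x ⊗ₜ (b ⊗ₜ c))))) ?_ ?_ ?_ b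
      · intro c; simp
      · intro b b' hb hb' c
        simp only [add_tmul, tmul_add, map_add, hb c, hb' c]
      · intro j y hy
        refine hind (fun c =>
            (leg12 φ) ((leg23 φ) ((leg12 φ) (x ⊗ₜ (y ⊗ₜ c)))) =
            (leg23 φ) ((leg12 φ) ((leg23 φ) (x ⊗ₜ (y ⊗ₜ c))))) ?_ ?_ ?_
        · simp
        · intro c c' hc hc'
          simp only [tmul_add, map_add, hc, hc']
        · intro l t ht
          exact hpt i j l x hx y hy t ht
  have main2 : ∀ a b : L, ψ (φ (a ⊗ₜ b)) = a ⊗ₜ b := by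
    intro a
    refine hind (fun a => ∀ b : L, ψ (φ (a ⊗ₜ b)) = a ⊗ₜ b) ?_ ?_ ?_ a
    · intro b; simp
    · intro a a' ha ha' b; simp only [add_tmul, map_add, ha b, ha' b]
    · intro i x hx
      refine hind (fun b => ψ (φ (x ⊗ₜ b)) = x ⊗ₜ b) ?_ ?_ ?_
      · simp
      · intro b b' hb hb'; simp only [tmul_add, map_add, hb, hb']
      · intro j y hy
        have D := hφ i j x hx y hy
        have C1 := hψ (i+j) 0 _ (hgrade i j x hx y hy) z hz0
        have C2 := hψ j i y hy x hx
        rw [hanti j i y hy x hx] at C2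
        rw [hzc'] at C1
        rcases hval i with hi | hi <;> rcases hval j with hj | hj <;> subst hi hj <;>
          norm_num [show ((0:ZMod 2)).val = 0 from rfl, show ((1:ZMod 2)).val = 1 from rfl,
            show ((1:ZMod 2)+1) = 0 from rfl, show ((0:ZMod 2)+1) = 1 from rfl,
            show ((1:ZMod 2)+0) = 1 from rfl, show ((0:ZMod 2)+0) = 0 from rfl,
            show ((2:ZMod 2)).val = 0 from rfl] at D C1 C2 <;>
          rw [D] <;>
          simp only [map_add, map_smul, map_neg, C1, C2, smul_add, smul_neg, smul_smul,
            neg_smul, one_smul, neg_neg, tmul_neg, neg_tmul, tmul_smul, smul_tmul] <;>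
          module
  have main1 : ∀ a b : L, φ (ψ (a ⊗ₜ b)) = a ⊗ₜ b := by
    intro a
    refine hind (fun a => ∀ b : L, φ (ψ (a ⊗ₜ b)) = a ⊗ₜ b) ?_ ?_ ?_ a
    · intro b; simp
    · intro a a' ha ha' b; simp only [add_tmul, map_add, ha b, ha' b]
    · intro i x hx
      refine hind (fun b => φ (ψ (x ⊗ₜ b)) = x ⊗ₜ b) ?_ ?_ ?_
      · simp
      · intro b b' hb hb'; simp only [tmul_add, map_add, hb, hb']
      · intro j y hy
        have D := hψ i j x hx y hy
        have C1 := hφzl (i+j) _ (hgrade i j x hx y hy)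
        have C2 := hφ j i y hy x hx
        rw [hanti j i y hy x hx] at C2
        rcases hval i with hi | hi <;> rcases hval j with hj | hj <;> subst hi hj <;>
          norm_num [show ((0:ZMod 2)).val = 0 from rfl, show ((1:ZMod 2)).val = 1 from rfl,
            show ((1:ZMod 2)+1) = 0 from rfl, show ((0:ZMod 2)+1) = 1 from rfl,
            show ((1:ZMod 2)+0) = 1 from rfl, show ((0:ZMod 2)+0) = 0 from rfl,
            show ((2:ZMod 2)).val = 0 from rfl] at D C2 <;>
          rw [D] <;>
          simp only [map_add, map_smul, map_neg, C1, C2, smul_add, smul_neg, smul_smul,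
            neg_smul, one_smul, neg_neg, tmul_neg, neg_tmul, tmul_smul, smul_tmul] <;>
          module
  refine ⟨?_, ?_, ?_⟩
  · apply TensorProduct.ext'
    intro a w
    simp only [LinearMap.comp_apply]
    induction w using TensorProduct.induction_on with
    | zero => simp
    | add u v hu hv => simp only [tmul_add, map_add, hu, hv]
    | tmul b c => exact main3 a b c
  · apply TensorProduct.ext'
    intro a b
    simpa using main2 a b
  · apply TensorProduct.ext'
    intro a b
    simpa using main1 a b
end
end

section
/- Let L be a Lie algebra over k, z ∈ Z(L), and α ∈ k. Then φ: L⊗L → L⊗L, x⊗y ↦ α[x,y]⊗z + y⊗x, satisfies the braid equation φ¹²φ²³φ¹² = φ²³φ¹²φ²³, and is invertible with inverse x⊗y ↦ α z⊗[x,y] + y⊗x. -/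
open TensorProduct LinearMap

noncomputable section

variable {k : Type*} [Field k]

theorem yb_operator_from_lie_algebra
    (L : Type*) [LieRing L] [LieAlgebra k L]
    (z : L) (hz : z ∈ LieAlgebra.center k L) (α : k)
    (φ ψ : L ⊗[k] L →ₗ[k] L ⊗[k] L)
    (hφ : ∀ x y : L, φ (x ⊗ₜ[k] y) = α • (⁅x, y⁆ ⊗ₜ[k] z) + y ⊗ₜ[k] x)
    (hψ : ∀ x y : L, ψ (x ⊗ₜ[k] y) = α • (z ⊗ₜ[k] ⁅x, y⁆) + y ⊗ₜ[k] x) :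
    (leg12 φ ∘ₗ leg23 φ ∘ₗ leg12 φ = leg23 φ ∘ₗ leg12 φ ∘ₗ leg23 φ) ∧
    ψ ∘ₗ φ = LinearMap.id ∧ φ ∘ₗ ψ = LinearMap.id := by
  have hz1 : ∀ x : L, ⁅x, z⁆ = 0 := hz
  have hz2 : ∀ x : L, ⁅z, x⁆ = 0 := fun x => by rw [← lie_skew, hz1 x, neg_zero]
  refine ⟨?_, ?_, ?_⟩
  · ext x y w
    simp only [leg12, leg23, LinearMap.comp_apply, LinearEquiv.coe_coe,
      TensorProduct.AlgebraTensorModule.curry_apply, TensorProduct.curry_apply, LinearMap.coe_restrictScalars, TensorProduct.assoc_symm_tmul, TensorProduct.assoc_tmul,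
      LinearMap.rTensor_tmul, LinearMap.lTensor_tmul, hφ, hz1, hz2, map_add, map_smul,
      TensorProduct.tmul_add, TensorProduct.add_tmul, TensorProduct.tmul_smul,
      TensorProduct.smul_tmul', TensorProduct.zero_tmul, TensorProduct.tmul_zero,
      smul_zero, zero_add, add_zero, smul_add, smul_lie, lie_smul, smul_smul]
    rw [leibniz_lie x y w]
    simp only [TensorProduct.add_tmul, TensorProduct.smul_tmul, TensorProduct.tmul_smul, smul_add]
    abel
  · ext x y
    simp only [LinearMap.comp_apply, TensorProduct.AlgebraTensorModule.curry_apply, TensorProduct.curry_apply, LinearMap.coe_restrictScalars, hφ, hψ, map_add, map_smul,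
      hz1, hz2, lie_zero, zero_lie, TensorProduct.tmul_zero, TensorProduct.zero_tmul,
      smul_zero, zero_add, add_zero, LinearMap.id_apply, ← lie_skew y x,
      TensorProduct.tmul_neg, smul_neg]
    abel
  · ext x y
    simp only [LinearMap.comp_apply, TensorProduct.AlgebraTensorModule.curry_apply, TensorProduct.curry_apply, LinearMap.coe_restrictScalars, hφ, hψ, map_add, map_smul,
      hz1, hz2, lie_zero, zero_lie, TensorProduct.tmul_zero, TensorProduct.zero_tmul,
      smul_zero, zero_add, add_zero, LinearMap.id_apply, ← lie_skew y x,
      TensorProduct.neg_tmul, TensorProduct.tmul_neg, smul_neg]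
    abel
end
end

section
/- Let L be a Lie superalgebra over k, z ∈ Z(L) of degree 0, and α, β ∈ k with β ≠ 0. Then φ(x⊗y) = α[x,y]⊗z + β(−1)^{|x||y|} y⊗x satisfies the braid equation and has inverse φ⁻¹(x⊗y) = (α/β²) z⊗[x,y] + (1/β)(−1)^{|x||y|} y⊗x. -/
open TensorProduct LinearMap

noncomputable section

variable {k : Type*} [Field k]

lemma pow_parity {m n : ℕ} (h : m % 2 = n % 2) : (-1:k)^m = (-1:k)^n := by
  rw [neg_one_pow_eq_pow_mod_two, h, ← neg_one_pow_eq_pow_mod_two]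

lemma sign_sq (m : ℕ) : (-1:k)^m * (-1:k)^m = 1 := by
  rw [← pow_add]; exact Even.neg_one_pow ⟨m, by ring⟩

lemma sign_add_left (a b c : ZMod 2) :
    (-1:k)^((a+b).val * c.val) = (-1)^(a.val*c.val) * (-1)^(b.val*c.val) := by
  rw [← pow_add]; apply pow_parity
  rw [ZMod.val_add, Nat.mod_mul_mod, add_mul]

lemma sign_add_right (a b c : ZMod 2) :
    (-1:k)^(a.val * (b+c).val) = (-1)^(a.val*b.val) * (-1)^(a.val*c.val) := by
  rw [← pow_add]; apply pow_parity
  rw [ZMod.val_add, Nat.mul_mod_mod, mul_add]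

lemma sign_comm (a b : ZMod 2) : (-1:k)^(a.val * b.val) = (-1)^(b.val * a.val) := by
  rw [Nat.mul_comm]

lemma ext_homog {L M : Type*} [AddCommGroup L] [Module k L] [AddCommGroup M] [Module k M]
    {G : ZMod 2 → Submodule k L} (hG : DirectSum.IsInternal G)
    {f g : L →ₗ[k] M} (h : ∀ i : ZMod 2, ∀ x ∈ G i, f x = g x) : f = g := by
  ext v
  have hv : v ∈ ⨆ i, G i := by rw [hG.submodule_iSup_eq_top]; trivial
  refine Submodule.iSup_induction G (motive := fun w => f w = g w) hv
    (fun i x hx => h i x hx) (by simp) ?_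
  intro x y hx hy; simp [map_add, hx, hy]

lemma ext_homog2 {L M : Type*} [AddCommGroup L] [Module k L] [AddCommGroup M] [Module k M]
    {G : ZMod 2 → Submodule k L} (hG : DirectSum.IsInternal G)
    {f g : L ⊗[k] L →ₗ[k] M}
    (h : ∀ i j : ZMod 2, ∀ x ∈ G i, ∀ y ∈ G j, f (x ⊗ₜ y) = g (x ⊗ₜ y)) : f = g := by
  apply TensorProduct.ext
  apply ext_homog hG
  intro i x hx
  apply ext_homog hG
  intro j y hy
  exact h i j x hx y hy

lemma ext_homog3 {L M : Type*} [AddCommGroup L] [Module k L] [AddCommGroup M] [Module k M]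
    {G : ZMod 2 → Submodule k L} (hG : DirectSum.IsInternal G)
    {f g : L ⊗[k] (L ⊗[k] L) →ₗ[k] M}
    (h : ∀ i j l : ZMod 2, ∀ x ∈ G i, ∀ y ∈ G j, ∀ t ∈ G l,
      f (x ⊗ₜ (y ⊗ₜ t)) = g (x ⊗ₜ (y ⊗ₜ t))) : f = g := by
  apply TensorProduct.ext
  apply ext_homog hG
  intro i x hx
  apply ext_homog2 hG
  intro j l y hy t ht
  exact h i j l x hx y hy t ht

lemma leg12_apply {V : Type*} [AddCommGroup V] [Module k V]
    (R : V ⊗[k] V →ₗ[k] V ⊗[k] V) (x y t : V) :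
    leg12 R (x ⊗ₜ (y ⊗ₜ t)) = TensorProduct.assoc k V V V (R (x ⊗ₜ y) ⊗ₜ t) := by
  simp [leg12]

lemma leg23_apply {V : Type*} [AddCommGroup V] [Module k V]
    (R : V ⊗[k] V →ₗ[k] V ⊗[k] V) (x : V) (w : V ⊗[k] V) :
    leg23 R (x ⊗ₜ w) = x ⊗ₜ R w := by
  simp [leg23]

theorem yb_operator_from_lie_superalgebra_two_params
    (L : Type*) [AddCommGroup L] [Module k L]
    (G : ZMod 2 → Submodule k L) (hG : DirectSum.IsInternal G)
    (br : L →ₗ[k] L →ₗ[k] L)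
    (hgrade : ∀ i j : ZMod 2, ∀ x ∈ G i, ∀ y ∈ G j, br x y ∈ G (i + j))
    (hanti : ∀ i j : ZMod 2, ∀ x ∈ G i, ∀ y ∈ G j,
      br x y = -(((-1 : k) ^ (i.val * j.val)) • br y x))
    (hjacobi : ∀ i j l : ZMod 2, ∀ x ∈ G i, ∀ y ∈ G j, ∀ t ∈ G l,
      ((-1 : k) ^ (l.val * i.val)) • br x (br y t) +
      ((-1 : k) ^ (i.val * j.val)) • br y (br t x) +
      ((-1 : k) ^ (j.val * l.val)) • br t (br x y) = 0)
    (z : L) (hz0 : z ∈ G 0) (hzc : ∀ x : L, br z x = 0)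
    (α β : k) (hβ : β ≠ 0)
    (φ ψ : L ⊗[k] L →ₗ[k] L ⊗[k] L)
    (hφ : ∀ i j : ZMod 2, ∀ x ∈ G i, ∀ y ∈ G j,
      φ (x ⊗ₜ[k] y) = α • (br x y ⊗ₜ[k] z) +
        (β * (-1 : k) ^ (i.val * j.val)) • (y ⊗ₜ[k] x))
    (hψ : ∀ i j : ZMod 2, ∀ x ∈ G i, ∀ y ∈ G j,
      ψ (x ⊗ₜ[k] y) = (α / β ^ 2) • (z ⊗ₜ[k] br x y) +
        ((1 / β) * (-1 : k) ^ (i.val * j.val)) • (y ⊗ₜ[k] x)) :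
    (leg12 φ ∘ₗ leg23 φ ∘ₗ leg12 φ = leg23 φ ∘ₗ leg12 φ ∘ₗ leg23 φ) ∧
    ψ ∘ₗ φ = LinearMap.id ∧ φ ∘ₗ ψ = LinearMap.id := by
  -- bracket with z vanishes on both sides
  have hcz : ∀ i : ZMod 2, ∀ x ∈ G i, br x z = 0 := by
    intro i x hx
    rw [hanti i 0 x hx z hz0, hzc]; simp
  refine ⟨?_, ?_, ?_⟩
  · -- braid equation
    apply ext_homog3 hG
    intro i j l x hx y hy t ht
    have hb : br x y ∈ G (i + j) := hgrade i j x hx y hy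
    have hbxt : br x t ∈ G (i + l) := hgrade i l x hx t ht
    have hbyt : br y t ∈ G (j + l) := hgrade j l y hy t ht
    -- super Jacobi in the needed form
    have hA : br x (br y t) = br (br x y) t +
        ((-1:k)^(i.val*j.val)) • br y (br x t) := by
      have hj := hjacobi i j l x hx y hy t ht
      rw [hanti l i t ht x hx, hanti l (i+j) t ht _ hb, map_neg, map_smul] at hj
      simp only [smul_neg, smul_smul, ← sub_eq_add_neg] at hj
      rw [sub_sub, sub_eq_zero] at hj
      have h1 : br x (br y t)
          = ((-1:k)^(l.val*i.val)) • (((-1:k)^(l.val*i.val)) • br x (br y t)) := by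
        rw [smul_smul, sign_sq, one_smul]
      rw [h1, hj, smul_add, smul_smul, smul_smul]
      have c1 : (-1:k)^(l.val*i.val) * ((-1)^(i.val*j.val) * (-1)^(l.val*i.val))
          = (-1:k)^(i.val*j.val) := by
        linear_combination ((-1:k)^(i.val*j.val)) * sign_sq (k := k) (l.val*i.val)
      have c2 : (-1:k)^(l.val*i.val) * ((-1)^(j.val*l.val) * (-1)^(l.val*(i+j).val))
          = 1 := by
        rw [sign_add_right, sign_comm l i, sign_comm l j]
        linear_combination ((-1:k)^(j.val*l.val) * (-1)^(j.val*l.val)) *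
            sign_sq (k := k) (i.val*l.val) + sign_sq (k := k) (j.val*l.val)
      rw [c1, c2, one_smul, add_comm]
    -- pre-computed values of φ
    have hzz : φ (z ⊗ₜ[k] z) = β • (z ⊗ₜ[k] z) := by
      rw [hφ 0 0 z hz0 z hz0, hzc]; simp
    have hzt : φ (z ⊗ₜ[k] t) = β • (t ⊗ₜ[k] z) := by
      rw [hφ 0 l z hz0 t ht, hzc]; simp
    have hzy : φ (z ⊗ₜ[k] y) = β • (y ⊗ₜ[k] z) := by
      rw [hφ 0 j z hz0 y hy, hzc]; simp
    have hxz : φ (x ⊗ₜ[k] z) = β • (z ⊗ₜ[k] x) := by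
      rw [hφ i 0 x hx z hz0, hcz i x hx]; simp
    have hxy := hφ i j x hx y hy
    have hyt := hφ j l y hy t ht
    have hxt := hφ i l x hx t ht
    have h1 := hφ (i+j) l (br x y) hb t ht
    have h2 := hφ j (i+l) y hy (br x t) hbxt
    have h3 := hφ i (j+l) x hx (br y t) hbyt
    simp only [comp_apply, leg12_apply, leg23_apply, map_add, map_smul,
      hxy, hyt, hxt, h1, h2, h3, hzz, hzt, hzy, hxz,
      tmul_add, add_tmul, tmul_smul, ← smul_tmul', smul_smul,
      LinearEquiv.map_add, LinearEquiv.map_smul, assoc_tmul]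
    rw [hA]
    simp only [tmul_add, add_tmul, ← smul_tmul', tmul_smul, smul_add, smul_smul,
      sign_add_left, sign_add_right]
    match_scalars
    · ring
    · ring
    · ring
    · rw [sign_comm j i]
      linear_combination (α*β^2*(-1:k)^(j.val*l.val)) * sign_sq (k:=k) (i.val*j.val)
    · ring
    · ring
  · -- ψ ∘ φ = id
    apply ext_homog2 hG
    intro i j x hx y hy
    have hb : br x y ∈ G (i + j) := hgrade i j x hx y hy
    have hbz : br (br x y) z = 0 := hcz _ _ hb
    have hyx : br y x = -(((-1:k)^(i.val*j.val)) • br x y) := by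
      rw [hanti j i y hy x hx, Nat.mul_comm]
    have hsq : (-1:k)^(i.val*j.val) * (-1)^(i.val*j.val) = 1 := sign_sq _
    simp only [comp_apply, id_coe, id_eq]
    rw [hφ i j x hx y hy, map_add, map_smul, map_smul,
      hψ (i+j) 0 _ hb z hz0, hψ j i y hy x hx, hbz, hyx]
    simp only [ZMod.val_zero, Nat.mul_zero, pow_zero, mul_one, tmul_zero, smul_zero,
      zero_add, tmul_neg, tmul_smul, smul_neg, smul_smul, smul_add, add_smul, neg_smul]
    match_scalars
    · field_simp
      linear_combination (-α) * hsq
    · field_simp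
      linear_combination hsq
  · -- φ ∘ ψ = id
    apply ext_homog2 hG
    intro i j x hx y hy
    have hb : br x y ∈ G (i + j) := hgrade i j x hx y hy
    have hzb : br z (br x y) = 0 := hzc _
    have hyx : br y x = -(((-1:k)^(i.val*j.val)) • br x y) := by
      rw [hanti j i y hy x hx, Nat.mul_comm]
    have hsq : (-1:k)^(i.val*j.val) * (-1)^(i.val*j.val) = 1 := sign_sq _
    simp only [comp_apply, id_coe, id_eq]
    rw [hψ i j x hx y hy, map_add, map_smul, map_smul,
      hφ 0 (i+j) z hz0 _ hb, hφ j i y hy x hx, hzb, hyx]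
    simp only [ZMod.val_zero, Nat.zero_mul, pow_zero, mul_one, zero_tmul, smul_zero,
      zero_add, neg_tmul, tmul_smul, ← smul_tmul', smul_neg, smul_smul, smul_add,
      add_smul, neg_smul]
    match_scalars
    · field_simp
      linear_combination (-α) * hsq
    · field_simp
      linear_combination hsq
end
end

section
/- Let L = ⊕_{g∈G} L_g be a (G,θ)-Lie algebra over ℂ for a finite abelian group G and color function θ, and let z ∈ Z(L) be homogeneous of degree g with θ(g,a) = θ(a,g) = 1 for all a ∈ G and θ(g,g) = 1. Then for any α ∈ ℂ, the map R(x⊗y) = α⟨x,y⟩⊗z + θ(a,b) x⊗y (for x ∈ L_a, y ∈ L_b) satisfies the quantum Yang-Baxter equation R¹²R¹³R²³ = R²³R¹³R¹², and is invertible with inverse R⁻¹(x⊗y) = α⟨y,x⟩⊗z + θ(b,a) x⊗y. -/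
open TensorProduct LinearMap

noncomputable section

variable {k : Type*} [Field k]

theorem yb_operator_from_G_theta_lie_algebra
    (G : Type*) [AddCommGroup G] [Fintype G] [DecidableEq G]
    (θ : G → G → ℂ) (hθ0 : ∀ a b : G, θ a b ≠ 0)
    (hθadd1 : ∀ a b c : G, θ (a + b) c = θ a c * θ b c)
    (hθadd2 : ∀ a b c : G, θ a (b + c) = θ a b * θ a c)
    (hθsym : ∀ a b : G, θ a b * θ b a = 1)
    (L : Type*) [AddCommGroup L] [Module ℂ L]
    (Lg : G → Submodule ℂ L) (hL : DirectSum.IsInternal Lg)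
    (br : L →ₗ[ℂ] L →ₗ[ℂ] L)
    (hgrade : ∀ a b : G, ∀ x ∈ Lg a, ∀ y ∈ Lg b, br x y ∈ Lg (a + b))
    (hanti : ∀ a b : G, ∀ x ∈ Lg a, ∀ y ∈ Lg b, br x y = -(θ a b • br y x))
    (hjacobi : ∀ a b c : G, ∀ x ∈ Lg a, ∀ y ∈ Lg b, ∀ t ∈ Lg c,
      θ c a • br x (br y t) + θ b c • br t (br x y) + θ a b • br y (br t x) = 0)
    (g : G) (z : L) (hzg : z ∈ Lg g) (hzc : ∀ x : L, br z x = 0)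
    (hga : ∀ a : G, θ g a = 1) (hag : ∀ a : G, θ a g = 1) (hgg : θ g g = 1)
    (α : ℂ)
    (R S : L ⊗[ℂ] L →ₗ[ℂ] L ⊗[ℂ] L)
    (hR : ∀ a b : G, ∀ x ∈ Lg a, ∀ y ∈ Lg b,
      R (x ⊗ₜ[ℂ] y) = α • (br x y ⊗ₜ[ℂ] z) + θ a b • (x ⊗ₜ[ℂ] y))
    (hS : ∀ a b : G, ∀ x ∈ Lg a, ∀ y ∈ Lg b,
      S (x ⊗ₜ[ℂ] y) = α • (br y x ⊗ₜ[ℂ] z) + θ b a • (x ⊗ₜ[ℂ] y)) :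
    (leg12 R ∘ₗ leg13 R ∘ₗ leg23 R = leg23 R ∘ₗ leg13 R ∘ₗ leg12 R) ∧
    S ∘ₗ R = LinearMap.id ∧ R ∘ₗ S = LinearMap.id := by
  -- induction principle for homogeneous decomposition
  have hind : ∀ (P : L → Prop), P 0 → (∀ u v, P u → P v → P (u + v)) →
      (∀ a : G, ∀ u ∈ Lg a, P u) → ∀ u, P u := by
    intro P h0 hadd hhom u
    have hu : u ∈ ⨆ i, Lg i := by
      rw [hL.submodule_iSup_eq_top]; trivial
    exact Submodule.iSup_induction (motive := P) Lg hu hhom h0 hadd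
  -- bracket with z on the right vanishes
  have hbxz : ∀ a : G, ∀ x ∈ Lg a, br x z = 0 := by
    intro a x hx
    rw [hanti a g x hx z hzg, hzc, smul_zero, neg_zero]
  -- key consequence of the Jacobi identity
  have hkey : ∀ a b c : G, ∀ x ∈ Lg a, ∀ y ∈ Lg b, ∀ t ∈ Lg c,
      br (br x y) t = br x (br y t) + θ b c • br (br x t) y := by
    intro a b c x hx y hy t ht
    have hJ := hjacobi a b c x hx y hy t ht
    rw [hanti c (a + b) t ht (br x y) (hgrade a b x hx y hy),
      hanti c a t ht x hx] at hJ
    simp only [map_neg, map_smul] at hJ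
    rw [hanti b (a + c) y hy (br x t) (hgrade a c x hx t ht)] at hJ
    simp only [hθadd1, hθadd2] at hJ
    have h2 : θ c a • (br x (br y t) + θ b c • br (br x t) y - br (br x y) t) = 0 := by
      rw [← hJ]
      match_scalars
      case _ => ring1
      case _ => linear_combination (-(θ c a * θ b c)) * hθsym a b
      case _ => linear_combination (θ c a) * hθsym b c
    have h3 := (smul_eq_zero.mp h2).resolve_left (hθ0 c a)
    exact (sub_eq_zero.mp h3).symm
  -- formulas for the legs on homogeneous tensors
  have h12 : ∀ a b : G, ∀ x ∈ Lg a, ∀ y ∈ Lg b, ∀ t : L,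
      leg12 R (x ⊗ₜ[ℂ] (y ⊗ₜ[ℂ] t)) =
        α • (br x y ⊗ₜ[ℂ] (z ⊗ₜ[ℂ] t)) + θ a b • (x ⊗ₜ[ℂ] (y ⊗ₜ[ℂ] t)) := by
    intro a b x hx y hy t
    simp only [leg12, coe_comp, Function.comp_apply, LinearEquiv.coe_coe,
      TensorProduct.assoc_symm_tmul, rTensor_tmul, hR a b x hx y hy,
      add_tmul, smul_tmul', map_add, map_smul, TensorProduct.assoc_tmul]
  have h23 : ∀ b c : G, ∀ y ∈ Lg b, ∀ t ∈ Lg c, ∀ x : L,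
      leg23 R (x ⊗ₜ[ℂ] (y ⊗ₜ[ℂ] t)) =
        α • (x ⊗ₜ[ℂ] (br y t ⊗ₜ[ℂ] z)) + θ b c • (x ⊗ₜ[ℂ] (y ⊗ₜ[ℂ] t)) := by
    intro b c y hy t ht x
    simp only [leg23, lTensor_tmul, hR b c y hy t ht, tmul_add, tmul_smul]
  have h13 : ∀ a c : G, ∀ x ∈ Lg a, ∀ t ∈ Lg c, ∀ y : L,
      leg13 R (x ⊗ₜ[ℂ] (y ⊗ₜ[ℂ] t)) =
        α • (br x t ⊗ₜ[ℂ] (y ⊗ₜ[ℂ] z)) + θ a c • (x ⊗ₜ[ℂ] (y ⊗ₜ[ℂ] t)) := by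
    intro a c x hx t ht y
    simp only [leg13, coe_comp, Function.comp_apply, lTensor_tmul,
      LinearEquiv.coe_coe, TensorProduct.comm_tmul]
    rw [h12 a c x hx t ht y]
    simp only [map_add, map_smul, lTensor_tmul, LinearEquiv.coe_coe,
      TensorProduct.comm_tmul]
  refine ⟨?_, ?_, ?_⟩
  · -- Yang–Baxter
    apply TensorProduct.ext'
    intro x w
    simp only [coe_comp, Function.comp_apply]
    refine hind (fun x => ∀ w : L ⊗[ℂ] L,
        leg12 R (leg13 R (leg23 R (x ⊗ₜ[ℂ] w))) =
          leg23 R (leg13 R (leg12 R (x ⊗ₜ[ℂ] w)))) ?_ ?_ ?_ x w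
    · intro w; simp only [zero_tmul, map_zero]
    · intro u v hu hv w
      simp only [add_tmul, map_add, hu w, hv w]
    · intro a x hx w
      induction w using TensorProduct.induction_on with
      | zero => simp only [tmul_zero, map_zero]
      | add w1 w2 hw1 hw2 => simp only [tmul_add, map_add, hw1, hw2]
      | tmul y t =>
        refine hind (fun y => ∀ t : L,
            leg12 R (leg13 R (leg23 R (x ⊗ₜ[ℂ] (y ⊗ₜ[ℂ] t)))) =
              leg23 R (leg13 R (leg12 R (x ⊗ₜ[ℂ] (y ⊗ₜ[ℂ] t))))) ?_ ?_ ?_ y t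
        · intro t; simp only [zero_tmul, tmul_zero, map_zero]
        · intro u v hu hv t
          simp only [add_tmul, tmul_add, map_add, hu t, hv t]
        · intro b y hy t
          refine hind (fun t =>
              leg12 R (leg13 R (leg23 R (x ⊗ₜ[ℂ] (y ⊗ₜ[ℂ] t)))) =
                leg23 R (leg13 R (leg12 R (x ⊗ₜ[ℂ] (y ⊗ₜ[ℂ] t))))) ?_ ?_ ?_ t
          · simp only [tmul_zero, map_zero]
          · intro u v hu hv
            simp only [tmul_add, map_add, hu, hv]
          · intro c t ht
            have e1 : br x z = 0 := hbxz a x hx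
            have e2 : br y z = 0 := hbxz b y hy
            simp only [h23 b c y hy t ht, h23 g g z hzg z hzg,
              h23 g c z hzg t ht, h23 b g y hy z hzg,
              map_add, map_smul,
              h13 a g x hx z hzg, h13 a c x hx t ht,
              h13 (a + b) c (br x y) (hgrade a b x hx y hy) t ht,
              h12 a b x hx y hy,
              h12 a (b + c) x hx (br y t) (hgrade b c y hy t ht),
              h12 (a + c) b (br x t) (hgrade a c x hx t ht) y hy,
              e1, e2, hzc z, hzc t, zero_tmul, tmul_zero, smul_zero,
              zero_add, add_zero, hag, hga, hgg, one_smul,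
              hθadd1, hθadd2, smul_add, smul_smul]
            rw [hkey a b c x hx y hy t ht, add_tmul]
            simp only [smul_add, ← smul_tmul', smul_smul]
            match_scalars <;>
              first
                | ring1
                | linear_combination (α * θ a b) * hθsym b c
  · -- S ∘ R = id
    apply TensorProduct.ext'
    intro x y
    simp only [coe_comp, Function.comp_apply, id_coe, id_eq]
    refine hind (fun x => ∀ y : L, S (R (x ⊗ₜ[ℂ] y)) = x ⊗ₜ[ℂ] y) ?_ ?_ ?_ x y
    · intro y; simp only [zero_tmul, map_zero]
    · intro u v hu hv y; simp only [add_tmul, map_add, hu y, hv y]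
    · intro a x hx y
      refine hind (fun y => S (R (x ⊗ₜ[ℂ] y)) = x ⊗ₜ[ℂ] y) ?_ ?_ ?_ y
      · simp only [tmul_zero, map_zero]
      · intro u v hu hv; simp only [tmul_add, map_add, hu, hv]
      · intro b y hy
        rw [hR a b x hx y hy, map_add, map_smul, map_smul,
          hS (a + b) g (br x y) (hgrade a b x hx y hy) z hzg,
          hS a b x hx y hy, hzc, hga, hanti a b x hx y hy]
        simp only [zero_tmul, smul_zero, zero_add, one_smul, neg_tmul,
          smul_add, smul_neg, smul_smul, ← smul_tmul']
        match_scalars <;>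
          first
            | ring1
            | linear_combination hθsym a b
  · -- R ∘ S = id
    apply TensorProduct.ext'
    intro x y
    simp only [coe_comp, Function.comp_apply, id_coe, id_eq]
    refine hind (fun x => ∀ y : L, R (S (x ⊗ₜ[ℂ] y)) = x ⊗ₜ[ℂ] y) ?_ ?_ ?_ x y
    · intro y; simp only [zero_tmul, map_zero]
    · intro u v hu hv y; simp only [add_tmul, map_add, hu y, hv y]
    · intro a x hx y
      refine hind (fun y => R (S (x ⊗ₜ[ℂ] y)) = x ⊗ₜ[ℂ] y) ?_ ?_ ?_ y
      · simp only [tmul_zero, map_zero]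
      · intro u v hu hv; simp only [tmul_add, map_add, hu, hv]
      · intro b y hy
        rw [hS a b x hx y hy, map_add, map_smul, map_smul,
          hR (b + a) g (br y x) (hgrade b a y hy x hx) z hzg,
          hR a b x hx y hy, hbxz (b + a) (br y x) (hgrade b a y hy x hx),
          hag, hanti a b x hx y hy]
        simp only [zero_tmul, smul_zero, zero_add, one_smul, neg_tmul,
          smul_add, smul_neg, smul_smul, ← smul_tmul']
        match_scalars <;>
          first
            | ring1
            | linear_combination hθsym a b
            | linear_combination hθsym b a
            | linear_combination (-(1 + α)) * hθsym b a
            | linear_combination (-(1 + α)) * hθsym a b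
            | linear_combination (-α) * hθsym b a
            | linear_combination (-α) * hθsym a b
            | linear_combination α * hθsym b a
            | linear_combination α * hθsym a b
            | linear_combination (1 + α) * hθsym b a
            | linear_combination (1 + α) * hθsym a b
end
end

section
/- Let L be a Lie algebra over k, z ∈ Z(L), and α ∈ k. Then r: L⊗L → L⊗L, x⊗y ↦ [x,y]⊗z + α·x⊗y, satisfies the classical Yang-Baxter equation [r¹², r¹³] + [r¹², r²³] + [r¹³, r²³] = 0, where the brackets are commutators of operators on L⊗L⊗L. -/
open TensorProduct LinearMap

noncomputable section

variable {k : Type*} [Field k]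

theorem classical_ybe_from_lie_algebra
    (L : Type*) [LieRing L] [LieAlgebra k L]
    (z : L) (hz : z ∈ LieAlgebra.center k L) (α : k)
    (r : L ⊗[k] L →ₗ[k] L ⊗[k] L)
    (hr : ∀ x y : L, r (x ⊗ₜ[k] y) = ⁅x, y⁆ ⊗ₜ[k] z + α • (x ⊗ₜ[k] y)) :
    (leg12 r ∘ₗ leg13 r - leg13 r ∘ₗ leg12 r) +
    (leg12 r ∘ₗ leg23 r - leg23 r ∘ₗ leg12 r) +
    (leg13 r ∘ₗ leg23 r - leg23 r ∘ₗ leg13 r) = 0 := by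
  have hzc : ∀ x : L, ⁅x, z⁆ = 0 := hz
  have hzc' : ∀ x : L, ⁅z, x⁆ = 0 := by
    intro x; rw [← lie_skew, hzc, neg_zero]
  ext x y w
  simp only [LinearMap.add_apply, LinearMap.sub_apply, LinearMap.comp_apply,
    LinearMap.zero_apply, AlgebraTensorModule.curry_apply, curry_apply,
    LinearMap.coe_restrictScalars, leg12, leg13, leg23, LinearEquiv.coe_coe,
    TensorProduct.assoc_symm_tmul, TensorProduct.assoc_tmul,
    TensorProduct.comm_tmul, LinearMap.lTensor_tmul, LinearMap.rTensor_tmul, hr,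
    map_add, map_smul, TensorProduct.tmul_add, TensorProduct.add_tmul,
    TensorProduct.tmul_smul, TensorProduct.smul_tmul', hzc, hzc',
    TensorProduct.tmul_zero, TensorProduct.zero_tmul, smul_zero, add_zero,
    zero_add, smul_add, lie_zero, zero_lie]
  have hj : ⁅⁅x, w⁆, y⁆ = ⁅⁅x, y⁆, w⁆ - ⁅x, ⁅y, w⁆⁆ := by
    rw [lie_lie, ← lie_skew w y, ← lie_skew w ⁅x, y⁆, lie_neg]
    abel
  rw [hj]
  simp only [TensorProduct.sub_tmul, TensorProduct.add_tmul, smul_lie, lie_smul,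
    TensorProduct.tmul_smul, ← TensorProduct.smul_tmul', smul_smul]
  module
end
end

section
/- Let A be a unital Poisson algebra over k (with unit 1 for the associative product *) such that {x, 1} = 0 for all x ∈ A. Define W(x⊗y) = {x,y}⊗1 + x⊗y, X(x⊗y) = 1⊗{x,y} + x⊗y, Z(x⊗y) = 1⊗(x*y) + (x*y)⊗1 − y⊗x. Then (W, X, Z) is a WXZ-system: [W,W,W] = 0, [Z,Z,Z] = 0, [W,X,X] = 0, [X,X,Z] = 0. -/
open TensorProduct LinearMap

noncomputable section

variable {k : Type*} [Field k]

set_option maxHeartbeats 2000000 in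
theorem wxz_system_from_poisson_algebra
    (A : Type*) [Ring A] [Algebra k A]
    (br : A →ₗ[k] A →ₗ[k] A)
    (hanti : ∀ x y : A, br x y = -br y x)
    (hjacobi : ∀ x y t : A, br x (br y t) + br y (br t x) + br t (br x y) = 0)
    (hleibniz : ∀ x y t : A, br x (y * t) = br x y * t + y * br x t)
    (hone : ∀ x : A, br x 1 = 0)
    (W X Z : A ⊗[k] A →ₗ[k] A ⊗[k] A)
    (hW : ∀ x y : A, W (x ⊗ₜ[k] y) = br x y ⊗ₜ[k] (1 : A) + x ⊗ₜ[k] y)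
    (hX : ∀ x y : A, X (x ⊗ₜ[k] y) = (1 : A) ⊗ₜ[k] br x y + x ⊗ₜ[k] y)
    (hZ : ∀ x y : A, Z (x ⊗ₜ[k] y) =
      (1 : A) ⊗ₜ[k] (x * y) + (x * y) ⊗ₜ[k] (1 : A) - y ⊗ₜ[k] x) :
    ybComm W W W = 0 ∧ ybComm Z Z Z = 0 ∧ ybComm W X X = 0 ∧ ybComm X X Z = 0 := by
  have h1 : ∀ z : A, br 1 z = 0 := fun z => by rw [hanti]; simp [hone]
  refine ⟨?_, ?_, ?_, ?_⟩
  · ext x y z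
    simp [ybComm, leg12, leg13, leg23, hW, tmul_add, add_tmul, tmul_sub, sub_tmul, hone, h1]
    have key : (br x) ((br y) z) = (br ((br x) y)) z - (br ((br x) z)) y := by
      have e1 : (br ((br x) z)) y = (br y) ((br z) x) := by
        rw [hanti x z, map_neg, LinearMap.neg_apply, hanti (br z x) y, neg_neg]
      have e2 : (br ((br x) y)) z = -(br z) ((br x) y) := hanti _ _
      rw [e1, e2, ← sub_eq_zero, ← hjacobi x y z]
      abel
    rw [key, sub_tmul]; abel
  · ext x y z
    simp [ybComm, leg12, leg13, leg23, hZ, tmul_add, add_tmul, tmul_sub, sub_tmul]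
    simp only [mul_assoc]
    abel
  · ext x y z
    simp [ybComm, leg12, leg13, leg23, hW, hX, tmul_add, add_tmul, tmul_sub, sub_tmul, hone, h1]
    have key2 : (br x) ((br y) z) = (br ((br x) y)) z + (br y) ((br x) z) := by
      have e1 : (br y) ((br x) z) = -(br y) ((br z) x) := by
        rw [hanti x z]; simp
      have e2 : (br ((br x) y)) z = -(br z) ((br x) y) := hanti _ _
      rw [e1, e2, ← sub_eq_zero, ← hjacobi x y z]
      abel
    rw [key2, tmul_add, tmul_add]
    abel
  · ext x y z
    simp [ybComm, leg12, leg13, leg23, hX, hZ, tmul_add, add_tmul, tmul_sub, sub_tmul, hone, h1]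
    rw [hleibniz x y z]; simp only [tmul_add, add_tmul]
    abel
end
end

section
/- A Lie algebra (L, [,]) admits a Poisson algebra structure in which the associative product equals the Lie bracket (x*y = [x,y] for all x,y) if and only if [x,y] ∈ Z(L) for all x, y ∈ L. -/
theorem poisson_structure_with_product_eq_bracket_iff
    (k : Type*) [Field k] (h2 : (2 : k) ≠ 0) (h3 : (3 : k) ≠ 0)
    (L : Type*) [LieRing L] [LieAlgebra k L] :
    ((∀ x y z : L, ⁅⁅x, y⁆, z⁆ = ⁅x, ⁅y, z⁆⁆) ∧
      (∀ x y z : L, ⁅x, ⁅y, z⁆⁆ = ⁅⁅x, y⁆, z⁆ + ⁅y, ⁅x, z⁆⁆)) ↔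
    (∀ x y : L, ⁅x, y⁆ ∈ LieAlgebra.center k L) := by
  constructor
  · rintro ⟨hassoc, _⟩ x y
    intro w
    have h := leibniz_lie x w y
    rw [hassoc x w y] at h
    have key : ⁅w, ⁅x, y⁆⁆ = 0 := left_eq_add.mp h
    simpa using key
  · intro hc
    refine ⟨fun x y z => ?_, fun x y z => leibniz_lie x y z⟩
    have h1 : ⁅⁅x, y⁆, z⁆ = 0 := by
      rw [← lie_skew, hc x y z, neg_zero]
    rw [h1, hc y z x]
end

section
/- Let L be a Lie algebra over k with center Z(L), and suppose the map φ(x⊗y) = [x,y]⊗z + y⊗x (for a fixed z ∈ Z(L)) is used to define a functor from Lie algebras: for a Lie algebra map f: L₁ → L₂ extended to L₁⊕kx₀ → L₂⊕kx₀ with f(x₀)=x₀, one has (f⊗f)∘φ_{L₁'} = φ_{L₂'}∘(f⊗f) where L' = L⊕kx₀ with x₀ central and φ_{L'}(x⊗y) = [x,y]⊗x₀ + y⊗x. Conversely, if a linear map f with f(x₀)=x₀ satisfies (f⊗f)∘φ_{L₁'} = φ_{L₂'}∘(f⊗f), then f restricted to L₁ is a Lie algebra homomorphism into L₂' (i.e.,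 f([x,y]) = [f(x),f(y)] for all x,y ∈ L₁). -/
open TensorProduct LinearMap

noncomputable section

variable {k : Type*} [Field k]

/-- The bracket on L' = L + k*x0 with x0 central: [(x,a),(y,b)] = ([x,y], 0). -/
def brExt {L : Type*} [LieRing L] [LieAlgebra k L] (p q : L × k) : L × k :=
  (⁅p.1, q.1⁆, 0)

theorem lie_algebra_functor_to_yb_structures
    (L₁ L₂ : Type*) [LieRing L₁] [LieAlgebra k L₁] [LieRing L₂] [LieAlgebra k L₂]
    (φ₁ : (L₁ × k) ⊗[k] (L₁ × k) →ₗ[k] (L₁ × k) ⊗[k] (L₁ × k))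
    (φ₂ : (L₂ × k) ⊗[k] (L₂ × k) →ₗ[k] (L₂ × k) ⊗[k] (L₂ × k))
    (hφ₁ : ∀ p q : L₁ × k,
      φ₁ (p ⊗ₜ[k] q) = brExt p q ⊗ₜ[k] (((0 : L₁), (1 : k)) : L₁ × k) + q ⊗ₜ[k] p)
    (hφ₂ : ∀ p q : L₂ × k,
      φ₂ (p ⊗ₜ[k] q) = brExt p q ⊗ₜ[k] (((0 : L₂), (1 : k)) : L₂ × k) + q ⊗ₜ[k] p) :
    (∀ f : L₁ →ₗ⁅k⁆ L₂,
      TensorProduct.map (f.toLinearMap.prodMap LinearMap.id)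
          (f.toLinearMap.prodMap LinearMap.id) ∘ₗ φ₁ =
        φ₂ ∘ₗ TensorProduct.map (f.toLinearMap.prodMap LinearMap.id)
          (f.toLinearMap.prodMap LinearMap.id)) ∧
    (∀ g : L₁ × k →ₗ[k] L₂ × k,
      g (((0 : L₁), (1 : k)) : L₁ × k) = (((0 : L₂), (1 : k)) : L₂ × k) →
      TensorProduct.map g g ∘ₗ φ₁ = φ₂ ∘ₗ TensorProduct.map g g →
      ∀ x y : L₁, g ((⁅x, y⁆, (0 : k))) = brExt (g ((x, (0 : k)))) (g ((y, (0 : k))))) := by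
  constructor
  · intro f
    apply TensorProduct.ext'
    intro p q
    simp only [LinearMap.comp_apply, TensorProduct.map_tmul, hφ₁, hφ₂, map_add,
      TensorProduct.map_tmul]
    congr 1
    simp [brExt, LinearMap.prodMap_apply]
  · intro g hg0 hcomm x y
    have h := congrArg (fun F => F ((x, (0:k)) ⊗ₜ[k] (y, (0:k)))) hcomm
    simp only [LinearMap.comp_apply, TensorProduct.map_tmul, hφ₁, hφ₂, map_add] at h
    rw [hg0] at h
    have h2 : g (brExt (x, (0:k)) (y, (0:k))) ⊗ₜ[k] (((0 : L₂), (1 : k)) : L₂ × k)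
        = brExt (g (x, (0:k))) (g (y, (0:k))) ⊗ₜ[k] (((0 : L₂), (1 : k)) : L₂ × k) := by
      have := add_right_cancel h
      exact this
    -- apply v ⊗ w ↦ (snd w) • v to recover the first factor
    have h3 := congrArg ((TensorProduct.rid k (L₂ × k)).toLinearMap ∘ₗ
      TensorProduct.map (LinearMap.id) (LinearMap.snd k L₂ k)) h2
    simpa [brExt] using h3
end
end

section
/- Let (C, Δ, ε) be a coalgebra over k and define ψ_C: C⊗C → C⊗C by ψ_C = Δ⊗ε + ε⊗Δ − id_{C⊗C}, i.e., ψ_C(c⊗d) = Δ(c)ε(d) + ε(c)Δ(d) − c⊗d. Then ψ_C is a Yang-Baxter operator (invertible solution of the braid equation ψ¹²ψ²³ψ¹² = ψ²³ψ¹²ψ²³), and it satisfies (id⊗ε)∘ψ_C = ε⊗id and (ε⊗id)∘ψ_C = id⊗ε. -/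
open TensorProduct LinearMap

noncomputable section

variable {k : Type*} [Field k]

noncomputable section YBAux

variable {k : Type*} [Field k] (C : Type*) [AddCommGroup C] [Module k C] [Coalgebra k C]

/-- `c ⊗ d ↦ ε(d) • c`. -/
def pmY : C ⊗[k] C →ₗ[k] C :=
  (TensorProduct.rid k C).toLinearMap ∘ₗ (Coalgebra.counit (R := k) (A := C)).lTensor C

/-- `c ⊗ d ↦ ε(c) • d`. -/
def qmY : C ⊗[k] C →ₗ[k] C :=
  (TensorProduct.lid k C).toLinearMap ∘ₗ (Coalgebra.counit (R := k) (A := C)).rTensor C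

def smY : C ⊗[k] C →ₗ[k] C := pmY C + qmY C

def nmY : C ⊗[k] C →ₗ[k] C ⊗[k] C := Coalgebra.comul (R := k) (A := C) ∘ₗ smY C

variable {C}

@[simp] lemma pmY_tmul (c d : C) : pmY C (c ⊗ₜ[k] d) = Coalgebra.counit (R := k) d • c := by
  simp [pmY]

@[simp] lemma qmY_tmul (c d : C) : qmY C (c ⊗ₜ[k] d) = Coalgebra.counit (R := k) c • d := by
  simp [qmY]

lemma pmY_comul : pmY C ∘ₗ Coalgebra.comul (R := k) (A := C) = LinearMap.id := by
  rw [pmY, comp_assoc, Coalgebra.lTensor_counit_comp_comul]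
  ext c; simp

lemma qmY_comul : qmY C ∘ₗ Coalgebra.comul (R := k) (A := C) = LinearMap.id := by
  rw [qmY, comp_assoc, Coalgebra.rTensor_counit_comp_comul]
  ext c; simp

lemma smY_comul : smY C ∘ₗ Coalgebra.comul (R := k) (A := C) = LinearMap.id + LinearMap.id := by
  rw [smY, add_comp, pmY_comul, qmY_comul]

end YBAux

noncomputable section YBAux2
open Coalgebra

variable {k : Type*} [Field k] (C : Type*) [AddCommGroup C] [Module k C] [Coalgebra k C]

def D1Y : C ⊗[k] C →ₗ[k] C ⊗[k] (C ⊗[k] C) :=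
  (TensorProduct.assoc k C C C).toLinearMap ∘ₗ (Coalgebra.comul (R := k) (A := C)).rTensor C

def S1Y : C ⊗[k] (C ⊗[k] C) →ₗ[k] C ⊗[k] C :=
  (smY C).rTensor C ∘ₗ (TensorProduct.assoc k C C C).symm.toLinearMap

def D2Y : C ⊗[k] C →ₗ[k] C ⊗[k] (C ⊗[k] C) :=
  (Coalgebra.comul (R := k) (A := C)).lTensor C

def S2Y : C ⊗[k] (C ⊗[k] C) →ₗ[k] C ⊗[k] C := (smY C).lTensor C

variable {C}

lemma leg12_nmY : leg12 (nmY (k := k) C) = D1Y C ∘ₗ S1Y C := by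
  rw [nmY]
  unfold leg12 D1Y S1Y
  rw [rTensor_comp]
  simp only [comp_assoc]

lemma leg23_nmY : leg23 (nmY (k := k) C) = D2Y C ∘ₗ S2Y C := by
  rw [nmY]
  unfold leg23 D2Y S2Y
  rw [lTensor_comp]

lemma sum_counit_smul {a : C} {ι : Type*} (r : Coalgebra.Repr k a ι) :
    ∑ i ∈ r.index, Coalgebra.counit (R := k) (r.left i) • r.right i = a := by
  have h := Coalgebra.sum_counit_tmul_eq r
  apply_fun (TensorProduct.lid k C) at h
  simpa only [map_sum, TensorProduct.lid_tmul, one_smul] using h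

lemma sum_smul_counit {a : C} {ι : Type*} (r : Coalgebra.Repr k a ι) :
    ∑ i ∈ r.index, Coalgebra.counit (R := k) (r.right i) • r.left i = a := by
  have h := Coalgebra.sum_tmul_counit_eq r
  apply_fun (TensorProduct.rid k C) at h
  simpa only [map_sum, TensorProduct.rid_tmul, one_smul] using h

lemma K1Y : S1Y (k := k) C ∘ₗ D2Y C = Coalgebra.comul ∘ₗ qmY C + LinearMap.id := by
  apply TensorProduct.ext'
  intro c d
  have rd := Coalgebra.Repr.arbitrary k d
  simp only [coe_comp, Function.comp_apply, D2Y, lTensor_tmul, LinearMap.id_coe, id_eq,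
    LinearMap.add_apply, qmY_tmul, map_smul]
  rw [← rd.eq, tmul_sum, map_sum]
  have : ∀ i, S1Y C (c ⊗ₜ[k] (rd.left i ⊗ₜ[k] rd.right i)) =
      Coalgebra.counit (R := k) (rd.left i) • (c ⊗ₜ[k] rd.right i)
      + Coalgebra.counit (R := k) c • (rd.left i ⊗ₜ[k] rd.right i) := by
    intro i
    simp [S1Y, smY, add_tmul, smul_tmul']
  rw [Finset.sum_congr rfl fun i _ => this i, Finset.sum_add_distrib, add_comm]
  congr 1
  · rw [← Finset.smul_sum, rd.eq]
  · simp_rw [← tmul_smul]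
    rw [← tmul_sum, _root_.sum_counit_smul rd]

lemma K2Y : S2Y (k := k) C ∘ₗ D1Y C = Coalgebra.comul ∘ₗ pmY C + LinearMap.id := by
  apply TensorProduct.ext'
  intro c d
  have rc := Coalgebra.Repr.arbitrary k c
  simp only [coe_comp, Function.comp_apply, D1Y, rTensor_tmul, LinearEquiv.coe_coe,
    LinearMap.id_coe, id_eq, LinearMap.add_apply, pmY_tmul, map_smul]
  rw [← rc.eq, sum_tmul, map_sum, map_sum]
  have : ∀ i, S2Y C ((TensorProduct.assoc k C C C) ((rc.left i ⊗ₜ[k] rc.right i) ⊗ₜ[k] d)) =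
      Coalgebra.counit (R := k) d • (rc.left i ⊗ₜ[k] rc.right i)
      + Coalgebra.counit (R := k) (rc.right i) • (rc.left i ⊗ₜ[k] d) := by
    intro i
    simp [S2Y, smY, tmul_add, tmul_smul]
  rw [Finset.sum_congr rfl fun i _ => this i, Finset.sum_add_distrib]
  congr 1
  · rw [← Finset.smul_sum, rc.eq]
  · simp_rw [smul_tmul']
    rw [← sum_tmul, sum_smul_counit rc]

lemma K5Y : (pmY C + pmY C + qmY C) ∘ₗ S1Y (k := k) C
    = (pmY C + qmY C + qmY C) ∘ₗ S2Y C := by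
  apply TensorProduct.ext'
  intro c yz
  induction yz using TensorProduct.induction_on with
  | zero => simp
  | tmul y z =>
      simp only [coe_comp, Function.comp_apply, S1Y, S2Y, smY, LinearEquiv.coe_coe,
        assoc_symm_tmul, rTensor_tmul, lTensor_tmul, LinearMap.add_apply, pmY_tmul, qmY_tmul,
        add_tmul, tmul_add, map_add, map_smul, smul_add]
      simp only [smul_smul, smul_eq_mul]
      module
  | add u v hu hv =>
      simp only [tmul_add, map_add, hu, hv]

lemma middleY : (Coalgebra.comul ∘ₗ qmY (k := k) C + LinearMap.id) ∘ₗ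
      (Coalgebra.comul ∘ₗ pmY C + LinearMap.id)
    = Coalgebra.comul ∘ₗ (pmY C + pmY C + qmY C) + LinearMap.id := by
  have h4 : (Coalgebra.comul ∘ₗ qmY (k := k) C) ∘ₗ (Coalgebra.comul ∘ₗ pmY C)
      = Coalgebra.comul ∘ₗ pmY C := by
    rw [comp_assoc, ← comp_assoc (pmY C) Coalgebra.comul (qmY C), qmY_comul, id_comp]
  simp only [add_comp, comp_add, comp_id, id_comp, h4]
  abel

omit [Coalgebra k C] in
lemma hαα : (TensorProduct.assoc k C C C).symm.toLinearMap ∘ₗ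
    (TensorProduct.assoc k C C C).toLinearMap = LinearMap.id := by
  simp

omit [Coalgebra k C] in
lemma hαα' : (TensorProduct.assoc k C C C).toLinearMap ∘ₗ
    (TensorProduct.assoc k C C C).symm.toLinearMap = LinearMap.id := by
  simp

lemma K4Y : D1Y (k := k) C ∘ₗ Coalgebra.comul = D2Y C ∘ₗ Coalgebra.comul := by
  rw [D1Y, D2Y, comp_assoc]
  exact Coalgebra.coassoc

lemma S1D1Y : S1Y (k := k) C ∘ₗ D1Y C = LinearMap.id + LinearMap.id := by
  calc S1Y (k := k) C ∘ₗ D1Y C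
      = (smY C).rTensor C ∘ₗ ((TensorProduct.assoc k C C C).symm.toLinearMap ∘ₗ
          (TensorProduct.assoc k C C C).toLinearMap) ∘ₗ
          (Coalgebra.comul (R := k) (A := C)).rTensor C := by
        simp only [S1Y, D1Y, comp_assoc]
    _ = (smY C).rTensor C ∘ₗ (Coalgebra.comul (R := k) (A := C)).rTensor C := by
        rw [hαα, id_comp]
    _ = (smY C ∘ₗ Coalgebra.comul (R := k) (A := C)).rTensor C := (rTensor_comp _ _ _).symm
    _ = LinearMap.id + LinearMap.id := by
        rw [smY_comul, rTensor_add, rTensor_id]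

lemma S2D2Y : S2Y (k := k) C ∘ₗ D2Y C = LinearMap.id + LinearMap.id := by
  rw [S2Y, D2Y, ← lTensor_comp, smY_comul, lTensor_add, lTensor_id]

lemma keyY : leg12 (nmY (k := k) C) ∘ₗ leg23 (nmY C) ∘ₗ leg12 (nmY C) - leg12 (nmY C)
    = leg23 (nmY C) ∘ₗ leg12 (nmY C) ∘ₗ leg23 (nmY C) - leg23 (nmY C) := by
  have e1 : leg12 (nmY (k := k) C) ∘ₗ leg23 (nmY C) ∘ₗ leg12 (nmY C)
      = D1Y C ∘ₗ ((S1Y C ∘ₗ D2Y C) ∘ₗ (S2Y C ∘ₗ D1Y C)) ∘ₗ S1Y C := by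
    rw [leg12_nmY, leg23_nmY]
    simp only [comp_assoc]
  have e2 : leg23 (nmY (k := k) C) ∘ₗ leg12 (nmY C) ∘ₗ leg23 (nmY C)
      = D2Y C ∘ₗ ((S2Y C ∘ₗ D1Y C) ∘ₗ (S1Y C ∘ₗ D2Y C)) ∘ₗ S2Y C := by
    rw [leg12_nmY, leg23_nmY]
    simp only [comp_assoc]
  rw [K1Y, K2Y, middleY] at e1
  have middleY' : (Coalgebra.comul ∘ₗ pmY (k := k) C + LinearMap.id) ∘ₗ
        (Coalgebra.comul ∘ₗ qmY C + LinearMap.id)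
      = Coalgebra.comul ∘ₗ (pmY C + qmY C + qmY C) + LinearMap.id := by
    have h4 : (Coalgebra.comul ∘ₗ pmY (k := k) C) ∘ₗ (Coalgebra.comul ∘ₗ qmY C)
        = Coalgebra.comul ∘ₗ qmY C := by
      rw [comp_assoc, ← comp_assoc (qmY C) Coalgebra.comul (pmY C), pmY_comul, id_comp]
    simp only [add_comp, comp_add, comp_id, id_comp, h4]
    abel
  rw [K1Y, K2Y, middleY'] at e2
  have distr : ∀ (D : C ⊗[k] C →ₗ[k] C ⊗[k] (C ⊗[k] C))
      (S : C ⊗[k] (C ⊗[k] C) →ₗ[k] C ⊗[k] C) (X : C ⊗[k] C →ₗ[k] C ⊗[k] C),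
      D ∘ₗ (X + LinearMap.id) ∘ₗ S = D ∘ₗ X ∘ₗ S + D ∘ₗ S := by
    intro D S X
    rw [add_comp, id_comp, comp_add]
  rw [e1, e2, distr, distr, ← leg12_nmY, ← leg23_nmY]
  have final : D1Y (k := k) C ∘ₗ (Coalgebra.comul ∘ₗ (pmY C + pmY C + qmY C)) ∘ₗ S1Y C
      = D2Y C ∘ₗ (Coalgebra.comul ∘ₗ (pmY C + qmY C + qmY C)) ∘ₗ S2Y C := by
    calc D1Y (k := k) C ∘ₗ (Coalgebra.comul ∘ₗ (pmY C + pmY C + qmY C)) ∘ₗ S1Y C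
        = (D1Y C ∘ₗ Coalgebra.comul) ∘ₗ ((pmY C + pmY C + qmY C) ∘ₗ S1Y C) := by
          simp only [comp_assoc]
      _ = (D2Y C ∘ₗ Coalgebra.comul) ∘ₗ ((pmY C + qmY C + qmY C) ∘ₗ S2Y C) := by
          rw [K4Y, K5Y]
      _ = D2Y C ∘ₗ (Coalgebra.comul ∘ₗ (pmY C + qmY C + qmY C)) ∘ₗ S2Y C := by
          simp only [comp_assoc]
  rw [final]
  abel

lemma leg12_sq : leg12 (nmY (k := k) C) ∘ₗ leg12 (nmY C)
    = leg12 (nmY C) + leg12 (nmY C) := by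
  rw [leg12_nmY]
  calc (D1Y (k := k) C ∘ₗ S1Y C) ∘ₗ D1Y C ∘ₗ S1Y C
      = D1Y C ∘ₗ (S1Y C ∘ₗ D1Y C) ∘ₗ S1Y C := by simp only [comp_assoc]
    _ = D1Y C ∘ₗ S1Y C + D1Y C ∘ₗ S1Y C := by
        rw [S1D1Y, add_comp, comp_add, id_comp]

lemma leg23_sq : leg23 (nmY (k := k) C) ∘ₗ leg23 (nmY C)
    = leg23 (nmY C) + leg23 (nmY C) := by
  rw [leg23_nmY]
  calc (D2Y (k := k) C ∘ₗ S2Y C) ∘ₗ D2Y C ∘ₗ S2Y C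
      = D2Y C ∘ₗ (S2Y C ∘ₗ D2Y C) ∘ₗ S2Y C := by simp only [comp_assoc]
    _ = D2Y C ∘ₗ S2Y C + D2Y C ∘ₗ S2Y C := by
        rw [S2D2Y, add_comp, comp_add, id_comp]

lemma nmY_sq : nmY (k := k) C ∘ₗ nmY C = nmY C + nmY C := by
  rw [nmY]
  calc (Coalgebra.comul ∘ₗ smY (k := k) C) ∘ₗ Coalgebra.comul ∘ₗ smY C
      = Coalgebra.comul ∘ₗ (smY C ∘ₗ Coalgebra.comul) ∘ₗ smY C := by simp only [comp_assoc]
    _ = Coalgebra.comul ∘ₗ smY C + Coalgebra.comul ∘ₗ smY C := by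
        rw [smY_comul, add_comp, comp_add, id_comp]

lemma pmY_nmY : pmY (k := k) C ∘ₗ nmY C = pmY C + qmY C := by
  rw [nmY, ← comp_assoc, pmY_comul, id_comp, smY]

lemma qmY_nmY : qmY (k := k) C ∘ₗ nmY C = pmY C + qmY C := by
  rw [nmY, ← comp_assoc, qmY_comul, id_comp, smY]
end YBAux2

lemma ring_expand3 {R : Type*} [Ring R] (x y : R) :
    (x - 1) * ((y - 1) * (x - 1)) - ((y - 1) * ((x - 1) * (y - 1)))
    = (x * (y * x) - x) - (y * (x * y) - y) - (x * x - (x + x)) + (y * y - (y + y)) := by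
  noncomm_ring

lemma ring_expand2 {R : Type*} [Ring R] (x : R) :
    (x - 1) * (x - 1) = x * x - (x + x) + 1 := by
  noncomm_ring

theorem yb_operator_from_coalgebra
    (C : Type*) [AddCommGroup C] [Module k C] [Coalgebra k C]
    (ψ : C ⊗[k] C →ₗ[k] C ⊗[k] C)
    (hψ : ∀ c d : C, ψ (c ⊗ₜ[k] d) =
      (Coalgebra.counit (R := k) d) • Coalgebra.comul (R := k) c +
      (Coalgebra.counit (R := k) c) • Coalgebra.comul (R := k) d - c ⊗ₜ[k] d) :
    (leg12 ψ ∘ₗ leg23 ψ ∘ₗ leg12 ψ = leg23 ψ ∘ₗ leg12 ψ ∘ₗ leg23 ψ) ∧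
    Function.Bijective ψ ∧
    (TensorProduct.rid k C).toLinearMap ∘ₗ
        (Coalgebra.counit (R := k) (A := C)).lTensor C ∘ₗ ψ =
      (TensorProduct.lid k C).toLinearMap ∘ₗ
        (Coalgebra.counit (R := k) (A := C)).rTensor C ∧
    (TensorProduct.lid k C).toLinearMap ∘ₗ
        (Coalgebra.counit (R := k) (A := C)).rTensor C ∘ₗ ψ =
      (TensorProduct.rid k C).toLinearMap ∘ₗ
        (Coalgebra.counit (R := k) (A := C)).lTensor C := by
  have hψ' : ψ = nmY C - LinearMap.id := by
    apply TensorProduct.ext'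
    intro c d
    rw [hψ]
    simp [nmY, smY, LinearMap.sub_apply, map_add, map_smul]
  subst hψ'
  have h12 : leg12 (nmY (k := k) C - LinearMap.id) = leg12 (nmY C) - LinearMap.id := by
    unfold leg12
    rw [rTensor_sub, rTensor_id, sub_comp, comp_sub, id_comp, hαα']
  have h23 : leg23 (nmY (k := k) C - LinearMap.id) = leg23 (nmY C) - LinearMap.id := by
    unfold leg23
    rw [lTensor_sub, lTensor_id]
  refine ⟨?_, ?_, ?_, ?_⟩
  · rw [h12, h23]
    have hk := keyY (k := k) (C := C)
    have ha := leg12_sq (k := k) (C := C)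
    have hb := leg23_sq (k := k) (C := C)
    have h := ring_expand3 (leg12 (nmY (k := k) C)) (leg23 (nmY C))
    simp only [Module.End.mul_eq_comp, Module.End.one_eq_id] at h
    rw [hk, ha, hb] at h
    simp only [sub_self, sub_zero, add_zero] at h
    exact sub_eq_zero.mp h
  · have e : (nmY (k := k) C - LinearMap.id) ∘ₗ (nmY C - LinearMap.id) = LinearMap.id := by
      rw [sub_comp, comp_sub, comp_id, id_comp, nmY_sq]
      abel
    have hinv : Function.Involutive ⇑(nmY (k := k) C - LinearMap.id : C ⊗[k] C →ₗ[k] C ⊗[k] C) := fun x =>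
      LinearMap.congr_fun e x
    exact hinv.bijective
  · show pmY C ∘ₗ (nmY (k := k) C - LinearMap.id) = qmY C
    rw [comp_sub, pmY_nmY, comp_id]
    abel
  · show qmY C ∘ₗ (nmY (k := k) C - LinearMap.id) = pmY C
    rw [comp_sub, qmY_nmY, comp_id]
    abel
end
end
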